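/- arXiv:2104.07009 — 12 statements merged into one kernel-verified Lean document; each statement's English description precedes it below -/
import Mathlib

section
/- For σ ≥ 2 and f ∈ [-1/2, 1/2], r_σ(f) ≤ (1 - e^{-1})^{3⌊σ²⌋} ≤ exp(-σ²), where r_σ(f) = ∑_{j∈ℤ} (-1)^j exp(-(j²+2fj)/(2σ²)). -/
open Real

noncomputable def pw (σ x : ℝ) : ℝ :=
  ∑' j : ℕ, (-1 : ℝ) ^ j * Real.exp (-(((j : ℝ) + 1) ^ 2 + 2 * x * ((j : ℝ) + 1)) / (2 * σ ^ 2))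

noncomputable def rw' (σ f : ℝ) : ℝ :=
  ∑' j : ℤ, (-1 : ℝ) ^ j * Real.exp (-(((j : ℝ) ^ 2 + 2 * f * (j : ℝ)) / (2 * σ ^ 2)))

set_option maxHeartbeats 1000000 in
open Complex in
lemma rw'_le_exp (σ f : ℝ) (hσ : 2 ≤ σ) (hf : f ∈ Set.Icc (-(1:ℝ)/2) (1/2)) :
    rw' σ f ≤ Real.exp (-(3/2) * σ^2) := by
  obtain ⟨hf1, hf2⟩ := hf
  have hf1' : -(1:ℝ)/2 ≤ f := hf1
  have hf2' : f ≤ 1/2 := hf2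
  have hσ0 : (0:ℝ) < σ := by linarith
  have hσ2 : (4:ℝ) ≤ σ^2 := by nlinarith
  have hπ := Real.pi_pos
  have hπ3 : (3:ℝ) < π := Real.pi_gt_three
  have hπ4 : π < 3.15 := Real.pi_lt_d2
  have hw1 : (1:ℝ) ≤ 2*π*σ^2 := by nlinarith
  have hw0 : (0:ℝ) < 2*π*σ^2 := by positivity
  set a : ℂ := (((2*π*σ^2)⁻¹ : ℝ) : ℂ) with ha_def
  set b : ℂ := (((-(f*(2*π*σ^2)⁻¹)) : ℝ) : ℂ) + ((1/2 : ℝ):ℂ)*I with hb_def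
  have ha : 0 < a.re := by
    rw [ha_def, Complex.ofReal_re]
    positivity
  have hterm : ∀ n : ℤ, Complex.exp (-π * a * n^2 + 2*π*b*n)
      = (((-1:ℝ)^n * Real.exp (-(((n:ℝ)^2 + 2*f*n)/(2*σ^2)))) : ℝ) := by
    intro n
    have h1 : -(π:ℂ) * a * n^2 + 2*π*b*n
        = ((-π*(2*π*σ^2)⁻¹*((n:ℝ)^2+2*f*n) : ℝ) : ℂ) + n * (π * I) := by
      rw [ha_def, hb_def]; push_cast; ring
    have h2 : (-π*(2*π*σ^2)⁻¹*((n:ℝ)^2+2*f*n) : ℝ) = -(((n:ℝ)^2 + 2*f*n)/(2*σ^2)) := by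
      field_simp
    rw [h1, h2, Complex.exp_add, Complex.exp_int_mul, Complex.exp_pi_mul_I,
      ← Complex.ofReal_exp]
    push_cast
    ring
  have hsum : ((rw' σ f : ℝ) : ℂ) = ∑' n : ℤ, Complex.exp (-π * a * n^2 + 2*π*b*n) := by
    rw [rw', Complex.ofReal_tsum]
    exact tsum_congr fun n => (hterm n).symm
  have hPS := Complex.tsum_exp_neg_quadratic ha b
  set c : ℝ := f*(2*π*σ^2)⁻¹ with hc_def
  have hnorm : ∀ n : ℤ, ‖Complex.exp (-π/a * ((n:ℂ) + I*b)^2)‖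
      = Real.exp (-π*(2*π*σ^2)*(((n:ℝ)-1/2)^2 - c^2)) := by
    intro n
    have hz : -(π:ℂ)/a * ((n:ℂ) + I*b)^2
        = ((-π*(2*π*σ^2)*(((n:ℝ)-1/2)^2 - c^2) : ℝ) : ℂ)
          + ((2*π*(2*π*σ^2)*((n:ℝ)-1/2)*c : ℝ) : ℂ) * I := by
      rw [ha_def, hb_def, hc_def, div_eq_mul_inv, ← Complex.ofReal_inv, inv_inv]
      rw [Complex.ext_iff]
      constructor <;>
        simp only [pow_two, Complex.add_re, Complex.add_im, Complex.mul_re, Complex.mul_im,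
          Complex.neg_re, Complex.neg_im, Complex.I_re, Complex.I_im, Complex.ofReal_re,
          Complex.ofReal_im, Complex.intCast_re, Complex.intCast_im] <;>
        ring
    rw [hz, Complex.norm_exp]
    congr 1
    simp only [Complex.add_re, Complex.ofReal_re, Complex.mul_re, Complex.I_re, Complex.I_im,
      Complex.ofReal_im]
    ring
  set E : ℝ := Real.exp (-1) with hE_def
  set C : ℝ := Real.exp (-(π^2*σ^2)/2 + 2) with hC_def
  have hprod : Real.exp (-1) * Real.exp 1 = 1 := by rw [← Real.exp_add]; norm_num
  have h2e : (2:ℝ) ≤ Real.exp 1 := by nlinarith [Real.add_one_le_exp (1:ℝ)]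
  have hE0 : (0:ℝ) ≤ E := (Real.exp_pos _).le
  have hEhalf : E ≤ 1/2 := by
    nlinarith [mul_nonneg (sub_nonneg.2 h2e) (Real.exp_pos (-1)).le, hprod]
  have hC0 : (0:ℝ) < C := Real.exp_pos _
  have hgle : ∀ n : ℤ, Real.exp (-π*(2*π*σ^2)*(((n:ℝ)-1/2)^2 - c^2)) ≤ C * E^(n.natAbs) := by
    intro n
    have habs : ((n.natAbs : ℕ) : ℝ) = |(n:ℝ)| := by
      rw [Nat.cast_natAbs]; push_cast; ring
    have hEn : E^(n.natAbs) = Real.exp (-|(n:ℝ)|) := by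
      rw [hE_def, ← Real.exp_nat_mul, habs]; ring_nf
    rw [hEn, hC_def, ← Real.exp_add]
    apply Real.exp_le_exp.2
    have hc2 : 2*π^2*σ^2*c^2 ≤ 1 := by
      have hff : f^2 ≤ 1/4 := by nlinarith
      have hceq : 2*π^2*σ^2*c^2 = f^2 / (2*σ^2) := by
        rw [hc_def]
        field_simp
      rw [hceq, div_le_one (by positivity)]
      nlinarith
    have hnn : (0:ℝ) ≤ (n:ℝ)^2 - n := by
      rcases le_or_gt n 0 with h | h
      · have : (n:ℝ) ≤ 0 := by exact_mod_cast h
        nlinarith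
      · have : (1:ℝ) ≤ (n:ℝ) := by exact_mod_cast h
        nlinarith
    have habs2 : |(n:ℝ)| - 1 ≤ (n:ℝ)^2 - n := by
      rcases abs_cases (n:ℝ) with ⟨h1, _⟩ | ⟨h1, _⟩ <;>
        nlinarith [sq_nonneg ((n:ℝ)-1), sq_nonneg (n:ℝ)]
    have hππ : (1:ℝ) ≤ 2*π^2*σ^2 := by nlinarith
    have key : -π*(2*π*σ^2)*(((n:ℝ)-1/2)^2 - c^2) =
        -(2*π^2*σ^2)*((n:ℝ)^2 - n) - (π^2*σ^2)/2 + 2*π^2*σ^2*c^2 := by ring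
    rw [key]
    have h5 : |(n:ℝ)| - 1 ≤ 2*π^2*σ^2*((n:ℝ)^2 - n) := by
      calc |(n:ℝ)| - 1 ≤ (n:ℝ)^2 - n := habs2
        _ ≤ 2*π^2*σ^2*((n:ℝ)^2 - n) := by nlinarith
    linarith
  have hneg : ∀ m : ℕ, (-((m:ℤ)+1)).natAbs = m + 1 := fun m => by omega
  have hgeo : Summable (fun m : ℕ => E^m) := summable_geometric_of_lt_one hE0 (by linarith)
  have hs1 : Summable (fun m : ℕ => E^(((m:ℤ)).natAbs)) := by
    simpa [Int.natAbs_natCast] using hgeo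
  have hs2 : Summable (fun m : ℕ => E^((-((m:ℤ)+1)).natAbs)) := by
    refine (hgeo.mul_right E).congr fun m => ?_
    rw [hneg m, pow_succ]
  have hGs : Summable (fun n : ℤ => C * E^(n.natAbs)) :=
    Summable.mul_left C (Summable.of_nat_of_neg_add_one hs1 hs2)
  have hgs : Summable (fun n : ℤ => ‖Complex.exp (-π/a * ((n:ℂ) + I*b)^2)‖) :=
    Summable.of_nonneg_of_le (fun n => norm_nonneg _) (fun n => (hnorm n) ▸ hgle n) hGs
  have htsumG : ∑' n : ℤ, C * E^(n.natAbs) ≤ 3 * C := by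
    rw [tsum_mul_left]
    have hsplit := tsum_of_nat_of_neg_add_one (f := fun n : ℤ => E^(n.natAbs)) hs1 hs2
    have h1 : (∑' m : ℕ, E^(((m:ℤ)).natAbs)) = (1-E)⁻¹ := by
      simp only [Int.natAbs_natCast]
      exact tsum_geometric_of_lt_one hE0 (by linarith)
    have h2 : (∑' m : ℕ, E^((-((m:ℤ)+1)).natAbs)) = (1-E)⁻¹ * E := by
      have heq : ∀ m : ℕ, E^((-((m:ℤ)+1)).natAbs) = E^m * E := by
        intro m
        rw [hneg m, pow_succ]
      rw [tsum_congr heq, tsum_mul_right, tsum_geometric_of_lt_one hE0 (by linarith)]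
    have hE1' : (0:ℝ) < 1 - E := by linarith
    have h3 : (1-E)⁻¹ + (1-E)⁻¹ * E ≤ 3 := by
      have h4 : (1-E)⁻¹ + (1-E)⁻¹ * E = (1+E)/(1-E) := by
        field_simp
      rw [h4, div_le_iff₀ hE1']
      nlinarith
    rw [hsplit, h1, h2]
    nlinarith
  have hcpow : ‖1/a^(1/2 : ℂ)‖ ≤ 2*π*σ^2 := by
    have h0 : (0:ℝ) ≤ (2*π*σ^2)⁻¹ := by positivity
    have hrw : a^(1/2 : ℂ) = ((((2*π*σ^2)⁻¹)^((1:ℝ)/2) : ℝ) : ℂ) := by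
      rw [ha_def, Complex.ofReal_cpow h0]
      norm_num
    have hy : (((2*π*σ^2)⁻¹)^((1:ℝ)/2) : ℝ) = ((2*π*σ^2)^((1:ℝ)/2))⁻¹ :=
      Real.inv_rpow hw0.le _
    have hrp : (0:ℝ) < (2*π*σ^2)^((1:ℝ)/2) := Real.rpow_pos_of_pos hw0 _
    rw [hrw, hy, one_div, norm_inv, Complex.norm_real, Real.norm_eq_abs, abs_inv,
      abs_of_pos hrp, inv_inv]
    calc (2*π*σ^2)^((1:ℝ)/2) ≤ (2*π*σ^2)^((1:ℝ)) :=
          Real.rpow_le_rpow_of_exponent_le hw1 (by norm_num)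
      _ = 2*π*σ^2 := Real.rpow_one _
  have hmain : rw' σ f ≤ (2*π*σ^2) * (3*C) := by
    have hts : ∑' n : ℤ, ‖Complex.exp (-π/a * ((n:ℂ) + I*b)^2)‖ ≤ 3*C := by
      calc ∑' n : ℤ, ‖Complex.exp (-π/a * ((n:ℂ) + I*b)^2)‖
          ≤ ∑' n : ℤ, C * E^(n.natAbs) :=
            Summable.tsum_le_tsum (fun n => (hnorm n) ▸ hgle n) hgs hGs
        _ ≤ 3*C := htsumG
    calc rw' σ f ≤ ‖((rw' σ f : ℝ):ℂ)‖ := by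
          rw [Complex.norm_real, Real.norm_eq_abs]; exact le_abs_self _
      _ = ‖1/a^(1/2:ℂ) * ∑' n : ℤ, Complex.exp (-π/a * ((n:ℂ) + I*b)^2)‖ := by
          rw [hsum, hPS]
      _ ≤ ‖(1/a^(1/2:ℂ) : ℂ)‖ * ∑' n : ℤ, ‖Complex.exp (-π/a * ((n:ℂ) + I*b)^2)‖ := by
          rw [norm_mul]
          exact mul_le_mul_of_nonneg_left (norm_tsum_le_tsum_norm hgs) (norm_nonneg _)
      _ ≤ (2*π*σ^2) * (3*C) := by
          apply mul_le_mul hcpow hts (tsum_nonneg fun n => norm_nonneg _) hw0.le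
  have hfin : (2*π*σ^2) * (3*C) ≤ Real.exp (-(3/2) * σ^2) := by
    have e1 : σ^2 + 1 ≤ Real.exp (σ^2) := Real.add_one_le_exp _
    have e2 : (19:ℝ) ≤ Real.exp (σ^2) := by
      have hm : Real.exp (4:ℝ) ≤ Real.exp (σ^2) := Real.exp_le_exp.2 (by linarith)
      have h4 : Real.exp (4:ℝ) = Real.exp 1 ^ (4:ℕ) := by
        rw [← Real.exp_nat_mul]; norm_num
      have hx : (27/10:ℝ) ≤ Real.exp 1 := by nlinarith [Real.exp_one_gt_d9]
      have hx2 : (729/100:ℝ) ≤ (Real.exp 1)^2 := by nlinarith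
      have h5 : (19:ℝ) ≤ Real.exp 1 ^ (4:ℕ) := by
        nlinarith [hx2, sq_nonneg ((Real.exp 1)^2 - 729/100)]
      linarith
    have hB : 6*π*σ^2 ≤ Real.exp (σ^2) * Real.exp (σ^2) := by
      have h6 : (19:ℝ)*(σ^2+1) ≤ Real.exp (σ^2) * Real.exp (σ^2) :=
        mul_le_mul e2 e1 (by positivity) (Real.exp_pos _).le
      nlinarith
    calc (2*π*σ^2) * (3*C) = (6*π*σ^2) * C := by ring
      _ ≤ (Real.exp (σ^2) * Real.exp (σ^2)) * C :=
          mul_le_mul_of_nonneg_right hB hC0.le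
      _ = Real.exp (σ^2 + σ^2 + (-(π^2*σ^2)/2 + 2)) := by
          rw [hC_def, ← Real.exp_add, ← Real.exp_add]
      _ ≤ Real.exp (-(3/2) * σ^2) := Real.exp_le_exp.2 (by nlinarith)
  linarith

theorem stmt5 (σ f : ℝ) (hσ : 2 ≤ σ) (hf : f ∈ Set.Icc (-(1:ℝ)/2) (1/2)) :
    rw' σ f ≤ (1 - Real.exp (-1)) ^ (3 * ⌊σ ^ 2⌋₊) ∧
    (1 - Real.exp (-1)) ^ (3 * ⌊σ ^ 2⌋₊) ≤ Real.exp (-σ ^ 2) := by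
  have hσ0 : (0:ℝ) < σ := by linarith
  have hσ2 : (4:ℝ) ≤ σ^2 := by nlinarith
  have hprod : Real.exp (-1) * Real.exp 1 = 1 := by rw [← Real.exp_add]; norm_num
  have hElo : (367/1000 : ℝ) ≤ Real.exp (-1) := by
    nlinarith [Real.exp_one_lt_d9, Real.exp_pos (-1)]
  have hEhi : Real.exp (-1) ≤ 368/1000 := by
    nlinarith [Real.exp_one_gt_d9, Real.exp_pos (-1)]
  have hhalf : Real.exp (-(1/2 : ℝ)) ≤ 1 - Real.exp (-1) := by
    have hs : Real.exp (1/2 : ℝ) * Real.exp (1/2 : ℝ) = Real.exp 1 := by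
      rw [← Real.exp_add]; norm_num
    have h138 : (13/8 : ℝ) ≤ Real.exp (1/2 : ℝ) := by
      nlinarith [Real.exp_one_gt_d9, Real.exp_pos (1/2 : ℝ)]
    have hn : Real.exp (-(1/2:ℝ)) * Real.exp (1/2 : ℝ) = 1 := by
      rw [← Real.exp_add]; norm_num
    have h1 : Real.exp (-(1/2:ℝ)) ≤ 8/13 := by
      nlinarith [Real.exp_pos (-(1/2:ℝ))]
    linarith
  set n : ℕ := ⌊σ ^ 2⌋₊ with hn_def
  have hn4 : 4 ≤ n := Nat.le_floor (by exact_mod_cast hσ2)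
  have hfl : (n : ℝ) ≤ σ^2 := Nat.floor_le (by positivity)
  have hσn : σ^2 ≤ (n:ℝ) + 1 := (Nat.lt_floor_add_one _).le
  constructor
  · calc rw' σ f ≤ Real.exp (-(3/2) * σ^2) := rw'_le_exp σ f hσ hf
      _ ≤ Real.exp (-(3/2) * (n:ℝ)) := Real.exp_le_exp.2 (by nlinarith)
      _ = Real.exp (-(1/2 : ℝ)) ^ (3*n) := by
          rw [← Real.exp_nat_mul]; congr 1; push_cast; ring
      _ ≤ (1 - Real.exp (-1)) ^ (3*n) :=
          pow_le_pow_left₀ (Real.exp_pos _).le hhalf _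
  · have key1 : (1 - Real.exp (-1))^3 ≤ (7/10) * Real.exp (-1) := by
      nlinarith [hElo, hEhi, mul_nonneg (sub_nonneg.2 hElo) (sq_nonneg (Real.exp (-1) - 1)),
        mul_nonneg (sub_nonneg.2 hElo) (sub_nonneg.2 hEhi)]
    have hE0 : (0:ℝ) ≤ Real.exp (-1) := (Real.exp_pos _).le
    have h1E : (0:ℝ) ≤ 1 - Real.exp (-1) := by linarith
    calc (1 - Real.exp (-1)) ^ (3*n) = ((1 - Real.exp (-1))^3)^n := by rw [pow_mul]
      _ ≤ ((7/10) * Real.exp (-1))^n := pow_le_pow_left₀ (by positivity) key1 n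
      _ = (7/10 : ℝ)^n * Real.exp (-1)^n := mul_pow _ _ _
      _ ≤ (7/10 : ℝ)^4 * Real.exp (-1)^n := by
          apply mul_le_mul_of_nonneg_right _ (pow_nonneg hE0 n)
          exact pow_le_pow_of_le_one (by norm_num) (by norm_num) hn4
      _ ≤ Real.exp (-1) * Real.exp (-1)^n := by
          apply mul_le_mul_of_nonneg_right _ (pow_nonneg hE0 n)
          nlinarith
      _ = Real.exp (-(((n:ℝ)) + 1)) := by
          rw [← pow_succ', ← Real.exp_nat_mul]; congr 1; push_cast; ring
      _ ≤ Real.exp (-σ^2) := Real.exp_le_exp.2 (by linarith)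
end

section
/- For all σ > 0 and x ∈ ℝ, p_σ(x-1)·exp(-(x-1)²/(2σ²)) + (1 - p_σ(x+1))·exp(-(x+1)²/(2σ²)) = exp(-x²/(2σ²)), where p_σ(y) = ∑_{j≥1} (-1)^{j-1} exp(-(j²+2yj)/(2σ²)). -/
open Real

lemma summable_gauss (σ x : ℝ) (hσ : 0 < σ) :
    Summable (fun j : ℕ => Real.exp (-(x + j) ^ 2 / (2 * σ ^ 2))) := by
  have hc : (0 : ℝ) < 2 * σ ^ 2 := by positivity
  apply summable_of_ratio_norm_eventually_le (r := 1/2) (by norm_num)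
  have ht : Filter.Tendsto (fun n : ℕ => Real.exp (-(2 * (x + n) + 1) / (2 * σ ^ 2)))
      Filter.atTop (nhds 0) := by
    apply Real.tendsto_exp_atBot.comp
    have h1 : Filter.Tendsto (fun n : ℕ => (n : ℝ) * (-2 / (2 * σ ^ 2)) +
        (-(2 * x + 1) / (2 * σ ^ 2))) Filter.atTop Filter.atBot := by
      apply Filter.tendsto_atBot_add_const_right
      apply Filter.Tendsto.atTop_mul_const_of_neg
        (div_neg_of_neg_of_pos (by norm_num) (by positivity))
      exact tendsto_natCast_atTop_atTop
    convert h1 using 2 with n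
    field_simp
    ring
  have hev := ht.eventually (eventually_le_nhds (by norm_num : (0:ℝ) < 1/2))
  filter_upwards [hev] with n hn
  have hsplit : Real.exp (-(x + (n + 1 : ℕ)) ^ 2 / (2 * σ ^ 2)) =
      Real.exp (-(2 * (x + n) + 1) / (2 * σ ^ 2)) * Real.exp (-(x + n) ^ 2 / (2 * σ ^ 2)) := by
    rw [← Real.exp_add]
    congr 1
    push_cast
    field_simp
    ring
  rw [Real.norm_eq_abs, Real.norm_eq_abs, abs_of_pos (Real.exp_pos _),
    abs_of_pos (Real.exp_pos _), hsplit]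
  exact mul_le_mul_of_nonneg_right hn (Real.exp_pos _).le

theorem stmt7 (σ x : ℝ) (hσ : 0 < σ) :
    pw σ (x - 1) * Real.exp (-(x - 1) ^ 2 / (2 * σ ^ 2)) +
      (1 - pw σ (x + 1)) * Real.exp (-(x + 1) ^ 2 / (2 * σ ^ 2)) =
      Real.exp (-x ^ 2 / (2 * σ ^ 2)) := by
  have hσ2 : σ ^ 2 ≠ 0 := by positivity
  set S : ℕ → ℝ := fun j => (-1 : ℝ) ^ j * Real.exp (-(x + j) ^ 2 / (2 * σ ^ 2)) with hS
  have hSsum : Summable S := by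
    apply Summable.of_norm
    have := summable_gauss σ x hσ
    convert this using 2 with j
    simp [hS, norm_mul, abs_of_pos (Real.exp_pos _)]
  have h1 : pw σ (x - 1) * Real.exp (-(x - 1) ^ 2 / (2 * σ ^ 2)) = ∑' j : ℕ, S j := by
    rw [pw, ← tsum_mul_right]
    congr 1 with j
    rw [mul_assoc, ← Real.exp_add, hS]
    congr 2
    field_simp
    ring
  have h2 : pw σ (x + 1) * Real.exp (-(x + 1) ^ 2 / (2 * σ ^ 2)) = ∑' j : ℕ, S (j + 2) := by
    rw [pw, ← tsum_mul_right]
    congr 1 with j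
    rw [mul_assoc, ← Real.exp_add, hS]
    have hsgn : ((-1 : ℝ)) ^ j = (-1 : ℝ) ^ (j + 2) := by ring
    rw [hsgn]
    congr 2
    push_cast
    field_simp
    ring
  have hSsum1 : Summable (fun j : ℕ => S (j + 1)) := (summable_nat_add_iff 1).2 hSsum
  have hpeel : ∑' j : ℕ, S j = S 0 + S 1 + ∑' j : ℕ, S (j + 2) := by
    rw [Summable.tsum_eq_zero_add hSsum, Summable.tsum_eq_zero_add hSsum1, ← add_assoc]
  have hS0 : S 0 = Real.exp (-x ^ 2 / (2 * σ ^ 2)) := by simp [hS]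
  have hS1 : S 1 = -Real.exp (-(x + 1) ^ 2 / (2 * σ ^ 2)) := by
    simp [hS]
  rw [sub_mul, one_mul, h1, h2, hpeel, hS0, hS1]
  ring
end

section
/- Fix σ > 0 and f ∈ [-1/2, 1/2]. The Markov kernel on f + ℤ defined as follows preserves the discrete Gaussian measure with mass at n+f proportional to exp(-(n+f)²/(2σ²)): for n ≥ 1, state n+f moves to n+1+f with probability p_σ(n+f) and to n-1+f otherwise; state -n+f moves to -n-1+f with probability p_σ(n-f) and to -n+1+f otherwise; and state f moves to 1+f with probability p_σ(f), to -1+f with probability p_σ(-f), and stays at f with probability r_σ(f) = 1 - p_σ(f) - p_σ(-f). -/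
open Real

/-- Transition kernel of the `0, ±1` walk on `f + ℤ` (states indexed by `ℤ`). -/
noncomputable def jacobiKernel (σ f : ℝ) (n m : ℤ) : ℝ :=
  if 1 ≤ n then
    (if m = n + 1 then pw σ ((n : ℝ) + f)
     else if m = n - 1 then 1 - pw σ ((n : ℝ) + f) else 0)
  else if n ≤ -1 then
    (if m = n - 1 then pw σ (-(n : ℝ) - f)
     else if m = n + 1 then 1 - pw σ (-(n : ℝ) - f) else 0)
  else
    (if m = 1 then pw σ f
     else if m = -1 then pw σ (-f)
     else if m = 0 then rw' σ f else 0)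

/-- Gaussian weight. -/
noncomputable def gg (σ x : ℝ) : ℝ := Real.exp (-x ^ 2 / (2 * σ ^ 2))

lemma gg_summable (σ x : ℝ) (hσ : 0 < σ) :
    Summable (fun j : ℕ => gg σ (x + (j : ℝ) + 1)) := by
  have hc : (0 : ℝ) < 2 * σ ^ 2 := by positivity
  have hneg : -(1 / (2 * σ ^ 2)) < 0 := by
    rw [neg_lt_zero]; positivity
  apply Summable.of_norm_bounded_eventually
    (g := fun j : ℕ => Real.exp ((j : ℝ) * -(1 / (2 * σ ^ 2))))
    (Real.summable_exp_nat_mul_iff.mpr hneg)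
  rw [Nat.cofinite_eq_atTop]
  filter_upwards [Filter.eventually_ge_atTop ⌈2 * |x| + 2⌉₊] with j hj
  have hjx : 2 * |x| + 2 ≤ (j : ℝ) := (Nat.le_ceil _).trans (by exact_mod_cast hj)
  rw [Real.norm_eq_abs, gg, abs_of_pos (Real.exp_pos _)]
  apply Real.exp_le_exp.2
  rw [show ((j : ℝ) * -(1 / (2 * σ ^ 2))) = -(j : ℝ) / (2 * σ ^ 2) by ring]
  rw [div_le_div_iff_of_pos_right hc, neg_le_neg_iff]
  nlinarith [neg_abs_le x, abs_nonneg x, sq_nonneg ((j : ℝ) - 2 * |x| - 2)]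

lemma a_summable (σ x : ℝ) (hσ : 0 < σ) :
    Summable (fun j : ℕ => (-1 : ℝ) ^ j * gg σ (x + (j : ℝ) + 1)) := by
  apply Summable.of_norm_bounded (gg_summable σ x hσ)
  intro j
  rw [norm_mul, norm_pow, norm_neg, norm_one, one_pow, one_mul, Real.norm_eq_abs, gg,
    abs_of_pos (Real.exp_pos _)]

/-- The alternating tail sum. -/
noncomputable def SS (σ x : ℝ) : ℝ := ∑' j : ℕ, (-1 : ℝ) ^ j * gg σ (x + (j : ℝ) + 1)

lemma gmul_pw (σ x : ℝ) (hσ : 0 < σ) : gg σ x * pw σ x = SS σ x := by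
  rw [pw, SS, ← tsum_mul_left]
  refine tsum_congr fun j => ?_
  rw [gg, gg, ← mul_assoc, mul_comm (Real.exp _) _, mul_assoc, ← Real.exp_add]
  congr 1
  ring

lemma SS_rec (σ x : ℝ) (hσ : 0 < σ) : SS σ x = gg σ (x + 1) - SS σ (x + 1) := by
  rw [SS, Summable.tsum_eq_zero_add (a_summable σ x hσ)]
  have h1 : ∀ j : ℕ, (-1 : ℝ) ^ (j + 1) * gg σ (x + ((j : ℕ) + 1 : ℕ) + 1) =
      -((-1 : ℝ) ^ j * gg σ ((x + 1) + (j : ℝ) + 1)) := by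
    intro j
    push_cast
    rw [show x + ((j : ℝ) + 1) + 1 = (x + 1) + (j : ℝ) + 1 by ring]
    ring
  rw [tsum_congr h1, tsum_neg]
  simp [SS]
  ring

lemma rec' (σ x : ℝ) (hσ : 0 < σ) :
    gg σ x * pw σ x + gg σ (x + 1) * pw σ (x + 1) = gg σ (x + 1) := by
  rw [gmul_pw σ x hσ, gmul_pw σ (x + 1) hσ]
  have := SS_rec σ x hσ
  linarith

lemma key1 (σ x : ℝ) (hσ : 0 < σ) :
    gg σ x * pw σ x + gg σ (x + 2) * (1 - pw σ (x + 2)) = gg σ (x + 1) := by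
  have h1 := rec' σ x hσ
  have h2 := rec' σ (x + 1) hσ
  rw [show x + 1 + 1 = x + 2 by ring] at h2
  linarith [h1, h2]

lemma rw'_eq (σ f : ℝ) (hσ : 0 < σ) : rw' σ f = 1 - pw σ f - pw σ (-f) := by
  set B : ℤ → ℝ := fun j => (-1 : ℝ) ^ j *
    Real.exp (-(((j : ℝ) ^ 2 + 2 * f * (j : ℝ)) / (2 * σ ^ 2))) with hB
  have habs : ∀ y : ℝ, Real.exp (-((y ^ 2 + 2 * f * y) / (2 * σ ^ 2))) =
      Real.exp (f ^ 2 / (2 * σ ^ 2)) * Real.exp (-(f + y) ^ 2 / (2 * σ ^ 2)) := by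
    intro y
    rw [← Real.exp_add]
    congr 1
    ring
  have hshift : Summable (fun n : ℕ => Real.exp (-(f + (n : ℝ)) ^ 2 / (2 * σ ^ 2))) := by
    apply (gg_summable σ (f - 1) hσ).congr
    intro n
    rw [gg, show f - 1 + (n : ℝ) + 1 = f + n by ring]
  have hshift' : Summable (fun n : ℕ =>
      Real.exp (-(f + -((n : ℝ) + 1)) ^ 2 / (2 * σ ^ 2))) := by
    apply (gg_summable σ (-f) hσ).congr
    intro n
    rw [gg]
    congr 1
    ring
  have hpos : Summable (fun n : ℕ => B n) := by
    apply Summable.of_norm_bounded (hshift.mul_left (Real.exp (f ^ 2 / (2 * σ ^ 2))))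
    intro n
    have h : ‖B (n : ℤ)‖ = Real.exp (f ^ 2 / (2 * σ ^ 2)) *
        Real.exp (-(f + (n : ℝ)) ^ 2 / (2 * σ ^ 2)) := by
      simp only [hB, norm_mul, norm_zpow, norm_neg, norm_one, one_zpow, one_mul,
        Real.norm_eq_abs, abs_of_pos (Real.exp_pos _), Int.cast_natCast]
      exact habs (n : ℝ)
    exact le_of_eq h
  have hneg : Summable (fun n : ℕ => B (-((n : ℤ) + 1))) := by
    apply Summable.of_norm_bounded (hshift'.mul_left (Real.exp (f ^ 2 / (2 * σ ^ 2))))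
    intro n
    have h : ‖B (-((n : ℤ) + 1))‖ = Real.exp (f ^ 2 / (2 * σ ^ 2)) *
        Real.exp (-(f + -((n : ℝ) + 1)) ^ 2 / (2 * σ ^ 2)) := by
      simp only [hB, norm_mul, norm_zpow, norm_neg, norm_one, one_zpow, one_mul,
        Real.norm_eq_abs, abs_of_pos (Real.exp_pos _), Int.cast_neg, Int.cast_add,
        Int.cast_one, Int.cast_natCast]
      exact habs (-((n : ℝ) + 1))
    exact le_of_eq h
  have hrw : rw' σ f = ∑' n : ℕ, B n + ∑' n : ℕ, B (-((n : ℤ) + 1)) := by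
    rw [rw']
    exact tsum_of_nat_of_neg_add_one hpos hneg
  have h1 : ∑' n : ℕ, B n = 1 - pw σ f := by
    rw [Summable.tsum_eq_zero_add hpos, Nat.cast_zero]
    have hB0 : B 0 = 1 := by simp [hB]
    rw [hB0]
    have hterm : ∀ n : ℕ, B (((n + 1 : ℕ) : ℤ)) =
        -((-1 : ℝ) ^ n *
          Real.exp (-(((n : ℝ) + 1) ^ 2 + 2 * f * ((n : ℝ) + 1)) / (2 * σ ^ 2))) := by
      intro n
      simp only [hB]
      rw [zpow_natCast, pow_succ]
      push_cast
      ring_nf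
    rw [tsum_congr hterm, tsum_neg, pw]
    ring
  have h2 : ∑' n : ℕ, B (-((n : ℤ) + 1)) = -pw σ (-f) := by
    have hterm : ∀ n : ℕ, B (-((n : ℤ) + 1)) =
        -((-1 : ℝ) ^ n *
          Real.exp (-(((n : ℝ) + 1) ^ 2 + 2 * (-f) * ((n : ℝ) + 1)) / (2 * σ ^ 2))) := by
      intro n
      simp only [hB]
      have hzp : ((-1 : ℝ) ^ (-((n : ℤ) + 1))) = -(-1 : ℝ) ^ n := by
        rw [zpow_neg, zpow_add_one₀ (by norm_num : (-1 : ℝ) ≠ 0), zpow_natCast]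
        rcases neg_one_pow_eq_or ℝ n with h | h <;> rw [h] <;> norm_num
      rw [hzp]
      push_cast
      ring_nf
    rw [tsum_congr hterm, tsum_neg, pw]
  rw [hrw, h1, h2]
  ring

theorem stmt9 (σ f : ℝ) (hσ : 0 < σ) (hf : f ∈ Set.Icc (-(1:ℝ)/2) (1/2)) :
    (rw' σ f = 1 - pw σ f - pw σ (-f)) ∧
    ∀ m : ℤ,
      ∑' n : ℤ, Real.exp (-((n : ℝ) + f) ^ 2 / (2 * σ ^ 2)) * jacobiKernel σ f n m =
        Real.exp (-((m : ℝ) + f) ^ 2 / (2 * σ ^ 2)) := by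
  refine ⟨rw'_eq σ f hσ, fun m => ?_⟩
  have hsupp : ∀ n ∉ ({m - 1, m, m + 1} : Finset ℤ),
      Real.exp (-((n : ℝ) + f) ^ 2 / (2 * σ ^ 2)) * jacobiKernel σ f n m = 0 := by
    intro n hn
    simp only [Finset.mem_insert, Finset.mem_singleton, not_or] at hn
    obtain ⟨h1, h2, h3⟩ := hn
    rw [jacobiKernel]
    split_ifs <;> first | (exfalso; omega) | exact mul_zero _
  rw [tsum_eq_sum hsupp, Finset.sum_insert (by simp; omega),
    Finset.sum_insert (by simp), Finset.sum_singleton]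
  -- abbreviation for the weights
  have hFg : ∀ k : ℤ, Real.exp (-((k : ℝ) + f) ^ 2 / (2 * σ ^ 2)) = gg σ ((k : ℝ) + f) := by
    intro k; rw [gg]
  rcases lt_trichotomy m 0 with hm | hm | hm
  · -- m ≤ -1
    have e2 : jacobiKernel σ f m m = 0 := by
      rw [jacobiKernel, if_neg (by omega), if_pos (by omega), if_neg (by omega),
        if_neg (by omega)]
    have e1 : jacobiKernel σ f (m - 1) m = 1 - pw σ (-((m : ℝ) - 1) - f) := by
      rw [jacobiKernel, if_neg (by omega), if_pos (by omega), if_neg (by omega),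
        if_pos (by ring)]
      push_cast
      ring_nf
    have e3 : jacobiKernel σ f (m + 1) m = pw σ (-((m : ℝ) + 1) - f) := by
      rcases eq_or_lt_of_le (by omega : m ≤ -1) with hm1 | hm1
      · subst hm1
        have h0 : (-1 : ℤ) + 1 = 0 := by norm_num
        rw [h0, jacobiKernel, if_neg (by omega), if_neg (by omega), if_neg (by omega),
          if_pos rfl]
        push_cast
        norm_num
      · rw [jacobiKernel, if_neg (by omega), if_pos (by omega), if_pos (by ring)]
        push_cast
        ring_nf
    rw [e1, e2, e3]
    have hk := key1 σ (-(m : ℝ) - 1 - f) hσ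
    rw [show -(m : ℝ) - 1 - f + 2 = -((m : ℝ) - 1) - f by ring,
      show -(m : ℝ) - 1 - f + 1 = -(m : ℝ) - f by ring,
      show -(m : ℝ) - 1 - f = -((m : ℝ) + 1) - f by ring] at hk
    push_cast
    simp only [gg] at hk ⊢
    ring_nf at hk ⊢
    linarith
  · -- m = 0
    subst hm
    have e1 : jacobiKernel σ f (-1) 0 = 1 - pw σ (1 - f) := by
      rw [jacobiKernel, if_neg (by omega), if_pos (by omega), if_neg (by omega),
        if_pos (by ring)]
      norm_num
    have e2 : jacobiKernel σ f 0 0 = 1 - pw σ f - pw σ (-f) := by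
      rw [jacobiKernel, if_neg (by omega), if_neg (by omega), if_neg (by omega),
        if_neg (by omega), if_pos rfl]
      exact rw'_eq σ f hσ
    have e3 : jacobiKernel σ f 1 0 = 1 - pw σ (1 + f) := by
      rw [jacobiKernel, if_pos (by omega), if_neg (by omega), if_pos (by ring)]
      norm_num
    rw [show (0:ℤ) - 1 = -1 by norm_num, show (0:ℤ) + 1 = 1 by norm_num, e1, e2, e3]
    have hk1 := rec' σ f hσ
    have hk2 := rec' σ (-f) hσ
    simp only [gg] at hk1 hk2 ⊢
    push_cast
    ring_nf at hk1 hk2 ⊢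
    linarith
  · -- m ≥ 1
    have e2 : jacobiKernel σ f m m = 0 := by
      rw [jacobiKernel, if_pos (by omega), if_neg (by omega), if_neg (by omega)]
    have e3 : jacobiKernel σ f (m + 1) m = 1 - pw σ (((m : ℝ) + 1) + f) := by
      rw [jacobiKernel, if_pos (by omega), if_neg (by omega), if_pos (by ring)]
      push_cast
      ring_nf
    have e1 : jacobiKernel σ f (m - 1) m = pw σ (((m : ℝ) - 1) + f) := by
      rcases eq_or_lt_of_le (by omega : 1 ≤ m) with hm1 | hm1
      · rw [← hm1]
        have h0 : (1 : ℤ) - 1 = 0 := by norm_num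
        rw [h0, jacobiKernel, if_neg (by omega), if_neg (by omega), if_pos rfl]
        push_cast
        norm_num
      · rw [jacobiKernel, if_pos (by omega), if_pos (by ring)]
        push_cast
        ring_nf
    rw [e1, e2, e3]
    have hk := key1 σ ((m : ℝ) - 1 + f) hσ
    rw [show (m : ℝ) - 1 + f + 2 = ((m : ℝ) + 1) + f by ring,
      show (m : ℝ) - 1 + f + 1 = (m : ℝ) + f by ring] at hk
    push_cast
    simp only [gg] at hk ⊢
    ring_nf at hk ⊢
    linarith
end

section
/- If Z ~ N(0, σ²) and, conditionally on Z, a step J ∈ {-1, 0, 1} is taken according to the 0,±1 walk (Definition of the Jacobi walk with parameters σ and the fractional part f of Z in [-1/2, 1/2)), then Z + J is again distributed as N(0, σ²). -/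
open Real

/-- Probability that the `0,±1` walk started at `x` steps `+1`; here `round x` is the
integer part of `x` with fractional part in `[-1/2, 1/2)`. -/
noncomputable def stepUp (σ x : ℝ) : ℝ :=
  if round x ≤ -1 then 1 - pw σ (-x) else pw σ x

/-- Probability that the walk started at `x` steps `-1`. -/
noncomputable def stepDown (σ x : ℝ) : ℝ :=
  if 1 ≤ round x then 1 - pw σ x else pw σ (-x)

/-- Probability that the walk started at `x` stays put. -/
noncomputable def stepStay (σ x : ℝ) : ℝ :=
  if round x = 0 then rw' σ x else 0

/-- Density of `N(0, σ²)`. -/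
noncomputable def gaussPdf (σ x : ℝ) : ℝ :=
  Real.exp (-x ^ 2 / (2 * σ ^ 2)) / (σ * Real.sqrt (2 * Real.pi))

/-- The alternating tail sum `∑_{j ≥ 0} (-1)^j g(c + j)`. -/
noncomputable def Sg (σ c : ℝ) : ℝ := ∑' j : ℕ, (-1 : ℝ) ^ j * gaussPdf σ (c + j)

lemma gaussPdf_even (σ x : ℝ) : gaussPdf σ (-x) = gaussPdf σ x := by
  unfold gaussPdf; rw [neg_sq]

lemma gaussPdf_nonneg (σ : ℝ) (hσ : 0 < σ) (x : ℝ) : 0 ≤ gaussPdf σ x := by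
  unfold gaussPdf
  have h : (0:ℝ) < Real.sqrt (2 * Real.pi) := Real.sqrt_pos.mpr (by positivity)
  positivity

lemma neg_one_zpow_negsucc (n : ℕ) : ((-1:ℝ)) ^ (-((n:ℤ)+1)) = -(-1:ℝ)^n := by
  have h : (-((n:ℤ)+1)) = -(((n+1:ℕ)):ℤ) := by push_cast; ring
  rw [h, zpow_neg, zpow_natCast, pow_succ]
  rcases Nat.even_or_odd n with he | he
  · rw [he.neg_one_pow]; norm_num
  · rw [he.neg_one_pow]; norm_num

lemma gauss_shift (σ : ℝ) (hσ : 0 < σ) (x y : ℝ) :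
    gaussPdf σ x * Real.exp (-(y ^ 2 + 2 * x * y) / (2 * σ ^ 2)) = gaussPdf σ (x + y) := by
  unfold gaussPdf
  rw [div_mul_eq_mul_div, ← Real.exp_add]
  congr 1
  have : (2 : ℝ) * σ ^ 2 ≠ 0 := by positivity
  field_simp
  ring

lemma summable_Sg (σ : ℝ) (hσ : 0 < σ) (c : ℝ) :
    Summable (fun j : ℕ => (-1 : ℝ) ^ j * gaussPdf σ (c + j)) := by
  set r : ℝ := Real.exp (-(1 / (2 * σ ^ 2))) with hr
  have hr0 : 0 ≤ r := (Real.exp_pos _).le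
  have hr1 : r < 1 := by
    rw [hr, Real.exp_lt_one_iff]
    have : (0 : ℝ) < 1 / (2 * σ ^ 2) := by positivity
    linarith
  have hC : (0 : ℝ) < σ * Real.sqrt (2 * Real.pi) := by
    have := Real.sqrt_pos.mpr (by positivity : (0 : ℝ) < 2 * Real.pi)
    positivity
  apply Summable.of_norm_bounded_eventually_nat (g := fun j => (1 / (σ * Real.sqrt (2 * Real.pi))) * r ^ j)
    ((summable_geometric_of_lt_one hr0 hr1).mul_left _)
  filter_upwards [Filter.eventually_ge_atTop ⌈|2 * c - 1|⌉₊] with j hj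
  have hj' : |2 * c - 1| ≤ (j : ℝ) := le_trans (Nat.le_ceil _) (by exact_mod_cast hj)
  have key : (j : ℝ) ≤ (c + j) ^ 2 := by
    have h0 : (0:ℝ) ≤ (j:ℝ) - |2 * c - 1| := by linarith
    have h1 : (0:ℝ) ≤ (j:ℝ) * ((j:ℝ) - |2 * c - 1|) :=
      mul_nonneg (Nat.cast_nonneg j) h0
    have h2 : (j:ℝ) * (-|2 * c - 1|) ≤ (j:ℝ) * (2 * c - 1) :=
      mul_le_mul_of_nonneg_left (neg_abs_le _) (Nat.cast_nonneg j)
    nlinarith [sq_nonneg c]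
  have h1 : Real.exp (-(c + (j : ℝ)) ^ 2 / (2 * σ ^ 2)) ≤ r ^ j := by
    rw [hr, ← Real.exp_nat_mul]
    apply Real.exp_le_exp.mpr
    have h2σ : (0 : ℝ) < 2 * σ ^ 2 := by positivity
    rw [div_le_iff₀ h2σ]
    have heq : (j:ℝ) * -(1 / (2 * σ ^ 2)) * (2 * σ ^ 2) = -(j:ℝ) := by
      field_simp
    rw [heq]
    linarith
  calc ‖(-1 : ℝ) ^ j * gaussPdf σ (c + j)‖ = gaussPdf σ (c + j) := by
        rw [norm_mul, norm_pow, norm_neg, norm_one, one_pow, one_mul,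
          Real.norm_of_nonneg (gaussPdf_nonneg σ hσ _)]
    _ ≤ (1 / (σ * Real.sqrt (2 * Real.pi))) * r ^ j := by
        unfold gaussPdf
        rw [div_eq_mul_inv, one_div, mul_comm ((σ * Real.sqrt (2 * Real.pi))⁻¹) (r ^ j)]
        exact mul_le_mul_of_nonneg_right h1 (inv_nonneg.mpr hC.le)

lemma Sg_rec (σ : ℝ) (hσ : 0 < σ) (c : ℝ) : Sg σ c = gaussPdf σ c - Sg σ (c + 1) := by
  unfold Sg
  rw [Summable.tsum_eq_zero_add (summable_Sg σ hσ c)]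
  have h1 : ∀ j : ℕ, (-1 : ℝ) ^ (j + 1) * gaussPdf σ (c + ↑(j + 1)) =
      -((-1 : ℝ) ^ j * gaussPdf σ (c + 1 + j)) := by
    intro j
    have harg : c + ((j + 1 : ℕ) : ℝ) = c + 1 + (j : ℝ) := by push_cast; ring
    rw [harg, pow_succ]
    ring
  simp only [h1, pow_zero, Nat.cast_zero, add_zero, one_mul]
  rw [tsum_neg]
  ring

lemma mul_pw (σ : ℝ) (hσ : 0 < σ) (x : ℝ) : gaussPdf σ x * pw σ x = Sg σ (x + 1) := by
  unfold pw Sg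
  rw [← tsum_mul_left]
  apply tsum_congr
  intro j
  rw [← mul_assoc, mul_comm (gaussPdf σ x) ((-1 : ℝ) ^ j), mul_assoc,
    gauss_shift σ hσ x ((j : ℝ) + 1),
    show x + ((j : ℝ) + 1) = x + 1 + (j : ℝ) by ring]

lemma mul_pw_neg (σ : ℝ) (hσ : 0 < σ) (x : ℝ) :
    gaussPdf σ x * pw σ (-x) = Sg σ (1 - x) := by
  unfold pw Sg
  rw [← tsum_mul_left]
  apply tsum_congr
  intro j
  rw [← mul_assoc, mul_comm (gaussPdf σ x) ((-1 : ℝ) ^ j), mul_assoc,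
    ← gaussPdf_even σ x, gauss_shift σ hσ (-x) ((j : ℝ) + 1),
    show -x + ((j : ℝ) + 1) = 1 - x + (j : ℝ) by ring]

set_option maxHeartbeats 1600000 in
lemma mul_rw (σ : ℝ) (hσ : 0 < σ) (x : ℝ) :
    gaussPdf σ x * rw' σ x = gaussPdf σ x - Sg σ (x + 1) - Sg σ (1 - x) := by
  unfold rw'
  rw [← tsum_mul_left]
  have hterm : ∀ j : ℤ, gaussPdf σ x * ((-1 : ℝ) ^ j *
      Real.exp (-(((j : ℝ) ^ 2 + 2 * x * (j : ℝ)) / (2 * σ ^ 2)))) =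
      (-1 : ℝ) ^ j * gaussPdf σ (x + j) := by
    intro j
    rw [← mul_assoc, mul_comm (gaussPdf σ x) ((-1 : ℝ) ^ j), mul_assoc]
    congr 1
    rw [show Real.exp (-(((j : ℝ) ^ 2 + 2 * x * (j : ℝ)) / (2 * σ ^ 2))) =
      Real.exp (-((j : ℝ) ^ 2 + 2 * x * (j : ℝ)) / (2 * σ ^ 2)) by rw [neg_div],
      gauss_shift σ hσ x (j : ℝ)]
  rw [tsum_congr hterm]
  have hnat : Summable (fun n : ℕ => (-1 : ℝ) ^ (n : ℤ) * gaussPdf σ (x + (n : ℤ))) := by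
    have := summable_Sg σ hσ x
    apply this.congr
    intro n
    rw [zpow_natCast]
    norm_num
  have hneg : Summable (fun n : ℕ => (-1 : ℝ) ^ (-((n : ℤ) + 1)) * gaussPdf σ (x + (-((n : ℤ) + 1) : ℤ))) := by
    have h := (summable_Sg σ hσ (1 - x)).neg
    apply h.congr
    intro n
    have hz : ((-1 : ℝ) ^ (-((n : ℤ) + 1)) : ℝ) = -(-1 : ℝ) ^ n :=
      neg_one_zpow_negsucc n
    rw [hz]
    have hg : gaussPdf σ (x + (-((n : ℤ) + 1) : ℤ)) = gaussPdf σ (1 - x + n) := by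
      rw [← gaussPdf_even σ (1 - x + n)]
      congr 1
      push_cast
      ring
    rw [hg]
    ring
  rw [tsum_of_nat_of_neg_add_one hnat hneg]
  have e1 : ∑' n : ℕ, (-1 : ℝ) ^ ((n : ℤ)) * gaussPdf σ (x + ((n : ℤ) : ℝ)) = Sg σ x := by
    apply tsum_congr
    intro n
    rw [zpow_natCast]
    norm_num [Sg]
  have e2 : ∑' n : ℕ, (-1 : ℝ) ^ (-((n : ℤ) + 1)) * gaussPdf σ (x + ((-((n : ℤ) + 1) : ℤ) : ℝ)) =
      -Sg σ (1 - x) := by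
    rw [Sg, ← tsum_neg]
    apply tsum_congr
    intro n
    have hz : ((-1 : ℝ) ^ (-((n : ℤ) + 1)) : ℝ) = -(-1 : ℝ) ^ n :=
      neg_one_zpow_negsucc n
    have hg : gaussPdf σ (x + ((-((n : ℤ) + 1) : ℤ) : ℝ)) = gaussPdf σ (1 - x + n) := by
      rw [← gaussPdf_even σ (1 - x + n)]
      congr 1
      push_cast
      ring
    rw [hz, hg]
    ring
  rw [e1, e2, Sg_rec σ hσ x]
  ring

/-- If `Z ∼ N(0,σ²)` and `J` is a step of the Jacobi `0,±1` walk given `Z`, then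
`Z + J ∼ N(0,σ²)`: the density of `Z + J` at every point `x` equals the Gaussian density. -/
theorem stmt10 (σ : ℝ) (hσ : 0 < σ) (x : ℝ) :
    gaussPdf σ (x - 1) * stepUp σ (x - 1) + gaussPdf σ x * stepStay σ x +
      gaussPdf σ (x + 1) * stepDown σ (x + 1) = gaussPdf σ x := by
  have hr1 : round (x - 1) = round x - 1 := round_sub_one x
  have hr2 : round (x + 1) = round x + 1 := round_add_one x
  have hB1 : gaussPdf σ (x - 1) * pw σ (-(x - 1)) = Sg σ (2 - x) := by
    rw [mul_pw_neg σ hσ (x - 1)]; ring_nf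
  have hA1 : gaussPdf σ (x - 1) * pw σ (x - 1) = Sg σ x := by
    rw [mul_pw σ hσ (x - 1)]; ring_nf
  have hA2 : gaussPdf σ (x + 1) * pw σ (x + 1) = Sg σ (x + 2) := by
    rw [mul_pw σ hσ (x + 1)]; ring_nf
  have hB2 : gaussPdf σ (x + 1) * pw σ (-(x + 1)) = Sg σ (-x) := by
    rw [mul_pw_neg σ hσ (x + 1)]; ring_nf
  have recx : Sg σ x = gaussPdf σ x - Sg σ (x + 1) := Sg_rec σ hσ x
  have recx1 : Sg σ (x + 1) = gaussPdf σ (x + 1) - Sg σ (x + 2) := by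
    have := Sg_rec σ hσ (x + 1); rw [this]; ring_nf
  have rec1x : Sg σ (1 - x) = gaussPdf σ (x - 1) - Sg σ (2 - x) := by
    have := Sg_rec σ hσ (1 - x)
    rw [this, ← gaussPdf_even σ (1 - x)]
    ring_nf
  have recnx : Sg σ (-x) = gaussPdf σ x - Sg σ (1 - x) := by
    have := Sg_rec σ hσ (-x)
    rw [this, ← gaussPdf_even σ x]
    ring_nf
  unfold stepUp stepDown stepStay
  rcases lt_trichotomy (round x) 0 with hn | hn | hn
  · -- round x ≤ -1
    rw [if_pos (by omega : round (x - 1) ≤ -1), if_neg (by omega : ¬ round x = 0),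
      if_neg (by omega : ¬ 1 ≤ round (x + 1))]
    rw [mul_sub, mul_one, hB1, hB2]
    linarith
  · -- round x = 0
    rw [if_pos (by omega : round (x - 1) ≤ -1), if_pos hn,
      if_pos (by omega : 1 ≤ round (x + 1))]
    rw [mul_sub, mul_one, hB1, mul_sub, mul_one, hA2, mul_rw σ hσ x]
    linarith
  · -- round x ≥ 1
    rw [if_neg (by omega : ¬ round (x - 1) ≤ -1), if_neg (by omega : ¬ round x = 0),
      if_pos (by omega : 1 ≤ round (x + 1))]
    rw [hA1, mul_sub, mul_one, hA2]
    linarith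
end

section
/- For σ ≥ 1 and f ∈ [-1/2, 1/2], p_σ(1+f) ≥ r_σ(f)·exp((2f+1)/(2σ²)), where p_σ(x) = ∑_{j≥1} (-1)^{j-1} exp(-(j²+2xj)/(2σ²)) and r_σ(f) = ∑_{j∈ℤ} (-1)^j exp(-(j²+2fj)/(2σ²)). -/
set_option maxHeartbeats 1000000

open Real

/-! Auxiliary machinery. -/

noncomputable def Maux (s c : ℝ) : ℤ → ℝ :=
  fun k => -((-1 : ℝ) ^ k * Real.exp (-((k : ℝ) ^ 2 + 2 * c * (k : ℝ)) / s))

lemma summable_exp_of_le (g : ℕ → ℝ) (A ε : ℝ) (hε : 0 < ε)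
    (h : ∀ n : ℕ, g n ≤ A - ε * n) : Summable fun n => Real.exp (g n) := by
  have hgeo : Summable fun n : ℕ => Real.exp A * Real.exp (-ε) ^ n :=
    (summable_geometric_of_lt_one (Real.exp_pos _).le
      (by rwa [Real.exp_lt_one_iff, neg_neg_iff_pos])).mul_left _
  refine Summable.of_nonneg_of_le (fun n => (Real.exp_pos _).le) (fun n => ?_) hgeo
  calc Real.exp (g n) ≤ Real.exp (A - ε * n) := Real.exp_le_exp.2 (h n)
    _ = Real.exp A * Real.exp (-ε) ^ n := by
        rw [← Real.exp_nat_mul, ← Real.exp_add]; ring_nf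

lemma summable_alt (d : ℕ → ℝ) (h0 : ∀ n, 0 ≤ d n) (hs : Summable d) :
    Summable fun n => (-1 : ℝ) ^ n * d n := by
  rw [← summable_abs_iff]
  refine hs.congr fun n => ?_
  rw [abs_mul, abs_pow, abs_neg, abs_one, one_pow, one_mul, abs_of_nonneg (h0 n)]

lemma alt_nonneg (d : ℕ → ℝ) (hm : ∀ n, d (n + 1) ≤ d n) (h0 : ∀ n, 0 ≤ d n)
    (hs : Summable d) : 0 ≤ ∑' n, (-1 : ℝ) ^ n * d n := by
  have hf : Summable fun n => (-1 : ℝ) ^ n * d n := summable_alt d h0 hs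
  have hinj : Function.Injective (fun k : ℕ => 2 * k) := fun a b h => by dsimp at h; omega
  have hinj' : Function.Injective (fun k : ℕ => 2 * k + 1) := fun a b h => by dsimp at h; omega
  have he : Summable fun k : ℕ => (-1 : ℝ) ^ (2 * k) * d (2 * k) := hf.comp_injective hinj
  have ho : Summable fun k : ℕ => (-1 : ℝ) ^ (2 * k + 1) * d (2 * k + 1) :=
    hf.comp_injective hinj'
  rw [← tsum_even_add_odd he ho]
  have h1 : ∀ k : ℕ, (-1 : ℝ) ^ (2 * k) * d (2 * k) = d (2 * k) := by
    intro k; rw [pow_mul]; norm_num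
  have h2 : ∀ k : ℕ, (-1 : ℝ) ^ (2 * k + 1) * d (2 * k + 1) = -d (2 * k + 1) := by
    intro k; rw [pow_succ, pow_mul]; norm_num
  have he' : Summable fun k => d (2 * k) := he.congr h1
  have ho' : Summable fun k => d (2 * k + 1) := by
    refine ho.neg.congr fun k => ?_
    rw [h2 k, neg_neg]
  have hle : ∑' k, d (2 * k + 1) ≤ ∑' k, d (2 * k) :=
    Summable.tsum_le_tsum (fun k => hm (2 * k)) ho' he'
  rw [tsum_congr h1, tsum_congr h2, tsum_neg]
  linarith

lemma alt_le (d : ℕ → ℝ) (hm : ∀ n, d (n + 1) ≤ d n) (h0 : ∀ n, 0 ≤ d n)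
    (hs : Summable d) : ∑' n, (-1 : ℝ) ^ n * d n ≤ d 0 := by
  have hf : Summable fun n => (-1 : ℝ) ^ n * d n := summable_alt d h0 hs
  rw [Summable.tsum_eq_zero_add hf]
  have h1 : ∀ n : ℕ, (-1 : ℝ) ^ (n + 1) * d (n + 1) = -((-1 : ℝ) ^ n * d (n + 1)) := by
    intro n; rw [pow_succ]; ring
  have h2 : 0 ≤ ∑' n, (-1 : ℝ) ^ n * d (n + 1) :=
    alt_nonneg (fun n => d (n + 1)) (fun n => hm (n + 1)) (fun n => h0 (n + 1))
      ((summable_nat_add_iff 1).2 hs)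
  have h3 : ∑' n, (-1 : ℝ) ^ (n + 1) * d (n + 1) = -∑' n, (-1 : ℝ) ^ n * d (n + 1) := by
    rw [tsum_congr h1, tsum_neg]
  rw [h3]; simp only [pow_zero, one_mul]; linarith

/-- The final four-term exponential inequality. -/
lemma four_term (s c : ℝ) (hs : 2 ≤ s) (hc1 : 1/2 ≤ c) (hc2 : c ≤ 3/2) :
    Real.exp ((2*c - 1)/s) - Real.exp ((4*c - 4)/s) + Real.exp ((6*c - 9)/s) ≤ 1 := by
  have hs0 : 0 < s := by linarith
  set X := Real.exp ((2*c - 3)/s) with hX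
  set Y := Real.exp (-2/s) with hY
  set P := Real.exp ((2*c - 1)/s) with hP
  have hX0 : 0 < X := Real.exp_pos _
  have hY0 : 0 < Y := Real.exp_pos _
  have hP0 : 0 < P := Real.exp_pos _
  have hX1 : X ≤ 1 := by
    rw [hX, ← Real.exp_zero]
    apply Real.exp_le_exp.2
    apply div_nonpos_of_nonpos_of_nonneg (by linarith) hs0.le
  have hYP : Y * P = X := by rw [hY, hP, hX, ← Real.exp_add]; congr 1; ring
  have hY3 : 1/3 < Y := by
    have h1 : Real.exp (-1 : ℝ) ≤ Y := by
      apply Real.exp_le_exp.2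
      rw [neg_div, neg_le_neg_iff]
      rw [div_le_one hs0]; linarith
    have h2 : Real.exp (1 : ℝ) < 3 := by
      have := Real.exp_one_lt_d9; norm_num at this ⊢; linarith
    have h3 : (1:ℝ)/3 < Real.exp (-1) := by
      rw [Real.exp_neg]
      rw [div_lt_iff₀ (by norm_num : (0:ℝ) < 3)]
      rw [inv_mul_eq_div, lt_div_iff₀ (Real.exp_pos 1)]
      linarith
    linarith
  have hb2 : Real.exp ((4*c - 4)/s) = P * X := by
    rw [hP, hX, ← Real.exp_add]; congr 1; ring
  have hb3 : Real.exp ((6*c - 9)/s) = X ^ 3 := by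
    rw [hX, ← Real.exp_nat_mul]
    norm_num
    ring
  rw [hb2, hb3]
  have key : Y * (1 - (P - P * X + X ^ 3)) =
      (1 - X) * (Y * (1 - X) ^ 2) + (1 - X) * (X * (3 * Y - 1)) := by
    linear_combination (X - 1) * hYP
  have h4 : 0 ≤ Y * (1 - (P - P * X + X ^ 3)) := by
    rw [key]
    have t1 : 0 ≤ (1 - X) * (Y * (1 - X) ^ 2) :=
      mul_nonneg (by linarith) (mul_nonneg hY0.le (sq_nonneg _))
    have t2 : 0 ≤ (1 - X) * (X * (3 * Y - 1)) :=
      mul_nonneg (by linarith) (mul_nonneg hX0.le (by linarith))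
    linarith
  nlinarith [h4, hY0]

/-- The alternating tail sum bound. -/
lemma Tbound (s c : ℝ) (hs : 2 ≤ s) (hc1 : 1/2 ≤ c) (hc2 : c ≤ 3/2) :
    ∑' n : ℕ, (-1 : ℝ) ^ n * Real.exp ((2*c*((n:ℝ)+1) - ((n:ℝ)+1)^2)/s) ≤ 1 := by
  have hs0 : 0 < s := by linarith
  set b : ℕ → ℝ := fun n => Real.exp ((2*c*(n:ℝ) - (n:ℝ)^2)/s) with hb
  have hb0 : ∀ n, 0 ≤ b n := fun n => (Real.exp_pos _).le
  have hSb : Summable b := by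
    apply summable_exp_of_le _ (4/s) (1/s) (by positivity)
    intro n
    have h1 : (4:ℝ)/s - 1/s * n = (4 - n)/s := by ring
    rw [h1, div_le_div_iff_of_pos_right hs0]
    nlinarith [sq_nonneg ((n:ℝ) - 2), Nat.cast_nonneg (α := ℝ) n]
  have hcast : ∀ (k n : ℕ), b (n + k) = Real.exp ((2*c*((n:ℝ)+k) - ((n:ℝ)+k)^2)/s) := by
    intro k n; rw [hb]; push_cast; ring_nf
  have hSb1 : Summable fun n => b (n + 1) := (summable_nat_add_iff 1).2 hSb
  have hSb2 : Summable fun n => b (n + 2) := (summable_nat_add_iff 2).2 hSb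
  have hSb3 : Summable fun n => b (n + 3) := (summable_nat_add_iff 3).2 hSb
  have hmono3 : ∀ n, b (n + 3 + 1) ≤ b (n + 3) := by
    intro n
    apply Real.exp_le_exp.2
    rw [div_le_div_iff_of_pos_right hs0]
    push_cast
    nlinarith [Nat.cast_nonneg (α := ℝ) n]
  have hid : ∑' n : ℕ, (-1 : ℝ) ^ n * Real.exp ((2*c*((n:ℝ)+1) - ((n:ℝ)+1)^2)/s)
      = ∑' n : ℕ, (-1 : ℝ) ^ n * b (n + 1) := by
    apply tsum_congr; intro n; rw [hcast 1 n]; norm_num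
  rw [hid]
  have hf1 : Summable fun n => (-1 : ℝ) ^ n * b (n + 1) := summable_alt _ (fun n => hb0 _) hSb1
  have hf2 : Summable fun n => (-1 : ℝ) ^ n * b (n + 2) := summable_alt _ (fun n => hb0 _) hSb2
  have peel1 : ∑' n : ℕ, (-1 : ℝ) ^ n * b (n + 1)
      = b 1 - ∑' n : ℕ, (-1 : ℝ) ^ n * b (n + 2) := by
    rw [Summable.tsum_eq_zero_add hf1]
    have : ∑' n : ℕ, (-1 : ℝ) ^ (n+1) * b (n + 1 + 1) = -∑' n : ℕ, (-1 : ℝ) ^ n * b (n + 2) := by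
      rw [← tsum_neg]; apply tsum_congr; intro n; rw [pow_succ]; ring_nf
    rw [this]; simp only [pow_zero, one_mul]; ring
  have peel2 : ∑' n : ℕ, (-1 : ℝ) ^ n * b (n + 2)
      = b 2 - ∑' n : ℕ, (-1 : ℝ) ^ n * b (n + 3) := by
    rw [Summable.tsum_eq_zero_add hf2]
    have : ∑' n : ℕ, (-1 : ℝ) ^ (n+1) * b (n + 1 + 2) = -∑' n : ℕ, (-1 : ℝ) ^ n * b (n + 3) := by
      rw [← tsum_neg]; apply tsum_congr; intro n
      have : n + 1 + 2 = n + 3 := by ring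
      rw [this, pow_succ]; ring_nf
    rw [this]; simp only [pow_zero, one_mul]; ring
  have htail : ∑' n : ℕ, (-1 : ℝ) ^ n * b (n + 3) ≤ b 3 :=
    alt_le _ hmono3 (fun n => hb0 _) hSb3
  have htail0 : 0 ≤ ∑' n : ℕ, (-1 : ℝ) ^ n * b (n + 3) :=
    alt_nonneg _ hmono3 (fun n => hb0 _) hSb3
  have hvals : b 1 = Real.exp ((2*c - 1)/s) ∧ b 2 = Real.exp ((4*c - 4)/s) ∧
      b 3 = Real.exp ((6*c - 9)/s) := by
    refine ⟨?_, ?_, ?_⟩ <;> (rw [hb]; norm_num) <;> ring_nf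
  obtain ⟨v1, v2, v3⟩ := hvals
  have := four_term s c hs hc1 hc2
  rw [peel1, peel2, v1]
  rw [← v2, ← v3] at this
  linarith

lemma step1 (σ f : ℝ) (hσ : 0 < σ) :
    rw' σ f * Real.exp ((2 * f + 1) / (2 * σ ^ 2)) = ∑' k : ℤ, Maux (2 * σ ^ 2) (1 + f) k := by
  have hs0 : (0:ℝ) < 2 * σ ^ 2 := by positivity
  rw [rw', ← tsum_mul_right, ← (Equiv.subRight (1 : ℤ)).tsum_eq (Maux (2 * σ ^ 2) (1 + f))]
  apply tsum_congr
  intro j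
  show (-1 : ℝ) ^ j * Real.exp (-(((j : ℝ) ^ 2 + 2 * f * (j : ℝ)) / (2 * σ ^ 2))) *
      Real.exp ((2 * f + 1) / (2 * σ ^ 2)) = Maux (2 * σ ^ 2) (1 + f) (j - 1)
  rw [Maux]
  have hsign : (-1 : ℝ) ^ (j - 1) = -(-1 : ℝ) ^ j := by
    rw [zpow_sub₀ (by norm_num : (-1:ℝ) ≠ 0), zpow_one]
    ring
  rw [hsign]
  rw [mul_assoc, ← Real.exp_add]
  push_cast
  rw [neg_mul, neg_neg]
  congr 2
  field_simp
  ring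

lemma step2 (σ f : ℝ) : pw σ (1 + f) = ∑' n : ℕ, Maux (2 * σ ^ 2) (1 + f) ((n : ℤ) + 1) := by
  rw [pw]
  apply tsum_congr
  intro n
  rw [Maux]
  have hsign : (-1 : ℝ) ^ ((n : ℤ) + 1) = -(-1 : ℝ) ^ n := by
    rw [zpow_add_one₀ (by norm_num : (-1:ℝ) ≠ 0), zpow_natCast]
    ring
  rw [hsign]
  push_cast
  ring_nf

lemma habs (s c : ℝ) (k : ℤ) :
    |Maux s c k| = Real.exp (-((k : ℝ) ^ 2 + 2 * c * (k : ℝ)) / s) := by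
  rw [Maux, abs_neg, abs_mul, abs_of_pos (Real.exp_pos _)]
  have h : |(-1:ℝ) ^ k| = 1 := by
    rcases Int.even_or_odd k with h | h
    · rw [h.neg_one_zpow]; norm_num
    · rw [Odd.neg_one_zpow h]; norm_num
  rw [h, one_mul]

lemma Spos (s c : ℝ) (hs : 2 ≤ s) (hc1 : 1/2 ≤ c) :
    Summable fun n : ℕ => Maux s c (n : ℤ) := by
  have hs0 : (0:ℝ) < s := by linarith
  rw [← summable_abs_iff]
  have base : Summable fun n : ℕ => Real.exp (-(((n:ℝ)) ^ 2 + 2 * c * (n:ℝ)) / s) := by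
    apply summable_exp_of_le _ 0 (1/s) (by positivity)
    intro n
    have h1 : (0:ℝ) - 1/s * n = (-(n:ℝ))/s := by ring
    rw [h1, div_le_div_iff_of_pos_right hs0]
    nlinarith [Nat.cast_nonneg (α := ℝ) n, sq_nonneg ((n:ℝ))]
  refine base.congr fun n => ?_
  rw [habs]; push_cast; ring_nf

lemma Sneg (s c : ℝ) (hs : 2 ≤ s) (hc2 : c ≤ 3/2) :
    Summable fun n : ℕ => Maux s c (-((n : ℤ) + 1)) := by
  have hs0 : (0:ℝ) < s := by linarith
  rw [← summable_abs_iff]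
  have base : Summable fun n : ℕ =>
      Real.exp ((2 * c * ((n:ℝ) + 1) - ((n:ℝ) + 1) ^ 2) / s) := by
    apply summable_exp_of_le _ (4/s) (1/s) (by positivity)
    intro n
    have h1 : (4:ℝ)/s - 1/s * n = (4 - (n:ℝ))/s := by ring
    rw [h1, div_le_div_iff_of_pos_right hs0]
    nlinarith [sq_nonneg ((n:ℝ) - 1), Nat.cast_nonneg (α := ℝ) n]
  refine base.congr fun n => ?_
  rw [habs]; congr 1; push_cast; ring

lemma htail_eq (s c : ℝ) :
    ∑' n : ℕ, Maux s c (-((n : ℤ) + 1)) =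
    ∑' n : ℕ, (-1:ℝ) ^ n * Real.exp ((2 * c * ((n:ℝ) + 1) - ((n:ℝ) + 1) ^ 2) / s) := by
  apply tsum_congr
  intro n
  rw [Maux]
  have hsign : (-1:ℝ) ^ (-((n:ℤ) + 1)) = -(-1:ℝ) ^ (n : ℕ) := by
    have h1 : (-((n:ℤ) + 1)) = -(((n + 1 : ℕ)) : ℤ) := by push_cast; ring
    have h2 : ((-1:ℝ) ^ (n + 1 : ℕ))⁻¹ = (-1:ℝ) ^ (n + 1 : ℕ) := by
      rcases Nat.even_or_odd (n + 1) with h | h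
      · rw [h.neg_one_pow]; norm_num
      · rw [h.neg_one_pow]; norm_num
    rw [h1, zpow_neg, zpow_natCast, h2, pow_succ]
    ring
  rw [hsign]
  have hexp : -(((-((n:ℤ) + 1) : ℤ) : ℝ) ^ 2 + 2 * c * ((-((n:ℤ) + 1) : ℤ) : ℝ)) / s
      = (2 * c * ((n:ℝ) + 1) - ((n:ℝ) + 1) ^ 2) / s := by
    push_cast; ring
  rw [hexp]
  ring

theorem stmt11 (σ f : ℝ) (hσ : 1 ≤ σ) (hf : f ∈ Set.Icc (-(1:ℝ)/2) (1/2)) :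
    rw' σ f * Real.exp ((2 * f + 1) / (2 * σ ^ 2)) ≤ pw σ (1 + f) := by
  obtain ⟨hf1, hf2⟩ := hf
  have hσ0 : 0 < σ := lt_of_lt_of_le one_pos hσ
  have hs : (2:ℝ) ≤ 2 * σ ^ 2 := by nlinarith
  have hc1 : (1:ℝ)/2 ≤ 1 + f := by linarith
  have hc2 : (1:ℝ) + f ≤ 3/2 := by linarith
  have spos := Spos (2 * σ ^ 2) (1 + f) hs (by linarith)
  have sneg := Sneg (2 * σ ^ 2) (1 + f) hs hc2
  rw [step1 σ f hσ0, step2 σ f]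
  rw [tsum_of_nat_of_neg_add_one spos sneg]
  have hzero : ∑' n : ℕ, Maux (2 * σ ^ 2) (1 + f) (n : ℤ)
      = Maux (2 * σ ^ 2) (1 + f) 0 + ∑' n : ℕ, Maux (2 * σ ^ 2) (1 + f) ((n : ℤ) + 1) := by
    rw [Summable.tsum_eq_zero_add spos]
    norm_num
  have hM0 : Maux (2 * σ ^ 2) (1 + f) 0 = -1 := by
    rw [Maux]; norm_num
  rw [hzero, hM0, htail_eq]
  have := Tbound (2 * σ ^ 2) (1 + f) hs hc1 hc2
  linarith
end

section
/- For σ ∈ [1, 2] and f ∈ [-1/2, 1/2], p_σ(1+f) ≥ exp(-(3+2f)/(2σ²)) - exp(-(4+2f)/σ²) ≥ 0.12, where p_σ(x) = ∑_{j≥1} (-1)^{j-1} exp(-(j²+2xj)/(2σ²)). -/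
open Real

set_option maxHeartbeats 1600000 in
theorem stmt12 (σ f : ℝ) (hσ : σ ∈ Set.Icc (1:ℝ) 2) (hf : f ∈ Set.Icc (-(1:ℝ)/2) (1/2)) :
    Real.exp (-(3 + 2 * f) / (2 * σ ^ 2)) - Real.exp (-(4 + 2 * f) / σ ^ 2) ≤ pw σ (1 + f) ∧
    (0.12 : ℝ) ≤ Real.exp (-(3 + 2 * f) / (2 * σ ^ 2)) - Real.exp (-(4 + 2 * f) / σ ^ 2) := by
  obtain ⟨hσ1, hσ2⟩ := hσ
  obtain ⟨hf1, hf2⟩ := hf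
  have hσ0 : (0:ℝ) < σ := lt_of_lt_of_le one_pos hσ1
  have hσsq1 : (1:ℝ) ≤ σ ^ 2 := by nlinarith
  have hσsq4 : σ ^ 2 ≤ 4 := by nlinarith
  have hσsq0 : (0:ℝ) < σ ^ 2 := by positivity
  set a : ℕ → ℝ := fun j =>
    Real.exp (-(((j : ℝ) + 1) ^ 2 + 2 * (1 + f) * ((j : ℝ) + 1)) / (2 * σ ^ 2)) with ha
  -- antitone
  have hanti : Antitone a := by
    intro i j hij
    have hij' : (i : ℝ) ≤ j := Nat.cast_le.2 hij
    have hi0 : (0:ℝ) ≤ i := Nat.cast_nonneg i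
    simp only [ha]
    apply Real.exp_le_exp.2
    rw [neg_div, neg_div, neg_le_neg_iff, div_le_div_iff_of_pos_right (by positivity)]
    nlinarith
  -- summability of the signed series
  have hsum : Summable (fun j : ℕ => (-1 : ℝ) ^ j * a j) := by
    apply Summable.of_abs
    have hgeo : Summable (fun j : ℕ => Real.exp (-(1 / (2 * σ ^ 2))) ^ j) :=
      summable_geometric_of_lt_one (Real.exp_nonneg _)
        (Real.exp_lt_one_iff.2 (by positivity |> neg_neg_of_pos))
    refine Summable.of_nonneg_of_le (fun j => abs_nonneg _) (fun j => ?_) hgeo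
    rw [abs_mul, abs_pow, abs_neg, abs_one, one_pow, one_mul,
      abs_of_pos (Real.exp_pos _), ← Real.exp_nat_mul]
    apply Real.exp_le_exp.2
    have hj0 : (0:ℝ) ≤ (j:ℝ) := Nat.cast_nonneg j
    rw [neg_div, mul_neg, neg_le_neg_iff, mul_one_div,
      div_le_div_iff_of_pos_right (by positivity)]
    nlinarith
  -- the limit
  have hl : Filter.Tendsto (fun n => ∑ i ∈ Finset.range n, (-1 : ℝ) ^ i * a i)
      Filter.atTop (nhds (pw σ (1 + f))) := by
    have := hsum.hasSum.tendsto_sum_nat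
    simpa [pw, ha] using this
  have hlow := hanti.alternating_series_le_tendsto hl 1
  have hrange : ∑ i ∈ Finset.range (2 * 1), (-1 : ℝ) ^ i * a i
      = Real.exp (-(3 + 2 * f) / (2 * σ ^ 2)) - Real.exp (-(4 + 2 * f) / σ ^ 2) := by
    have e0 : a 0 = Real.exp (-(3 + 2 * f) / (2 * σ ^ 2)) := by
      simp only [ha]; norm_num; ring_nf
    have e1 : a 1 = Real.exp (-(4 + 2 * f) / σ ^ 2) := by
      simp only [ha]
      congr 1
      push_cast
      ring
    rw [show 2 * 1 = 2 from rfl, Finset.sum_range_succ, Finset.sum_range_one, e0, e1]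
    ring
  constructor
  · rw [← hrange]; exact hlow
  -- numeric part
  · set c := Real.exp (-(1/4 : ℝ)) with hc
    have hcpos : 0 < c := Real.exp_pos _
    have hc4 : c ^ 4 * Real.exp 1 = 1 := by
      rw [hc, ← Real.exp_nat_mul, ← Real.exp_add]; norm_num
    have hc4a : (0.36787944 : ℝ) ≤ c ^ 4 := by
      nlinarith [Real.exp_one_lt_d9, Real.exp_pos 1, pow_pos hcpos 4]
    have hc4b : c ^ 4 ≤ (0.36787945 : ℝ) := by
      nlinarith [Real.exp_one_gt_d9, Real.exp_pos 1, pow_pos hcpos 4]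
    have hc1 : (0.7788 : ℝ) ≤ c := by
      by_contra h
      push_neg at h
      have : c ^ 4 < (0.7788 : ℝ) ^ 4 := by
        apply pow_lt_pow_left₀ h hcpos.le
        norm_num
      nlinarith
    have hc2 : c ≤ (0.77881 : ℝ) := by
      by_contra h
      push_neg at h
      have : (0.77881 : ℝ) ^ 4 < c ^ 4 := by
        apply pow_lt_pow_left₀ h (by norm_num)
        norm_num
      nlinarith
    set t := Real.exp (-((3 + 2 * f) / (2 * σ ^ 2))) with htdef
    have htc : t ≤ c := by
      apply Real.exp_le_exp.2
      rw [neg_le_neg_iff, div_le_div_iff₀ (by norm_num) (by positivity)]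
      nlinarith
    have ht8 : c ^ 8 ≤ t := by
      rw [hc, ← Real.exp_nat_mul]
      apply Real.exp_le_exp.2
      rw [show ((8:ℕ):ℝ) * -(1/4) = -2 by norm_num, neg_le_neg_iff,
        div_le_iff₀ (by positivity : (0:ℝ) < 2 * σ ^ 2)]
      nlinarith
    have ht1 : (0.1353352 : ℝ) ≤ t := by
      have h8 : (0.1353352 : ℝ) ≤ c ^ 8 := by nlinarith [pow_pos hcpos 4]
      linarith
    have ht2 : t^2 = Real.exp (-((3 + 2 * f) / σ ^ 2)) := by
      rw [htdef, sq, ← Real.exp_add]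
      congr 1
      ring
    have hsecond : Real.exp (-(4 + 2 * f) / σ ^ 2) ≤ c * t ^ 2 := by
      rw [ht2, hc, ← Real.exp_add]
      apply Real.exp_le_exp.2
      have hsplit : -(4 + 2 * f) / σ ^ 2 = -((3 + 2 * f) / σ ^ 2) + -(1 / σ ^ 2) := by ring
      have h14 : (1:ℝ)/4 ≤ 1 / σ ^ 2 := by
        rw [div_le_div_iff₀ (by norm_num) hσsq0]
        linarith
      rw [hsplit]
      linarith
    have hfirst : Real.exp (-(3 + 2 * f) / (2 * σ ^ 2)) = t := by
      rw [htdef, neg_div]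
    rw [hfirst]
    have hq : (0.12 : ℝ) ≤ t - c * t ^ 2 := by
      nlinarith [mul_nonneg (by linarith : (0:ℝ) ≤ t - 0.1353352) (by linarith : (0:ℝ) ≤ 0.77881 - t),
        sq_nonneg t, mul_pos hcpos hcpos]
    linarith
end

section
/- For σ ≥ 2 and f ∈ [-1/2, 1/2], p_σ(1+f) ≥ (1/2)·exp(-((σ+1-f)² + 2(1+f)(σ+1-f))/(2σ²)) ≥ 0.05·exp(1/σ²). -/
open Real

noncomputable def Gf (σ x t : ℝ) : ℝ := Real.exp (-(t ^ 2 + 2 * x * t) / (2 * σ ^ 2))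

lemma Gf_pos (σ x t : ℝ) : 0 < Gf σ x t := Real.exp_pos _

lemma Gf_anti {σ x s t : ℝ} (hσ : 0 < σ) (hx : 0 ≤ x) (hs : 0 ≤ s) (hst : s ≤ t) :
    Gf σ x t ≤ Gf σ x s := by
  have h2 : (0:ℝ) < 2 * σ ^ 2 := by positivity
  apply Real.exp_le_exp.2
  rw [div_le_div_iff₀ h2 h2]
  nlinarith [mul_le_mul_of_nonneg_right (show s^2 + 2*x*s ≤ t^2 + 2*x*t by nlinarith) h2.le]

lemma Gf_conv {σ x t : ℝ} (hσ : 0 < σ) (hx : 0 ≤ x) (ht : 0 ≤ t) (hcond : σ ≤ t + x + 1/2) :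
    2 * Gf σ x (t + 1) ≤ Gf σ x t + Gf σ x (t + 2) := by
  have hσ2 : (0:ℝ) < σ ^ 2 := by positivity
  set c : ℝ := 1 / σ ^ 2 with hc
  set α : ℝ := (2 * t + 1 + 2 * x) / (2 * σ ^ 2) with hα
  have hα1 : 1 / σ ≤ α := by
    rw [hα, div_le_div_iff₀ hσ (by positivity)]
    nlinarith
  have e1 : Gf σ x t = Real.exp α * Gf σ x (t + 1) := by
    unfold Gf; rw [← Real.exp_add]; congr 1; rw [hα]; field_simp; ring
  have e2 : Gf σ x (t + 2) = Real.exp (-(α + c)) * Gf σ x (t + 1) := by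
    unfold Gf; rw [← Real.exp_add]; congr 1; rw [hα, hc]; field_simp; ring
  have key : 2 ≤ Real.exp α + Real.exp (-(α + c)) := by
    set E := Real.exp α with hE
    set C := Real.exp c with hC
    have hEpos : 0 < E := Real.exp_pos _
    have hCpos : 0 < C := Real.exp_pos _
    have hc0 : 0 ≤ c := by positivity
    have hEb : 1 + α ≤ E := by have := Real.add_one_le_exp α; linarith
    have hCb : 1 - c ≤ 1 / C := by
      have := Real.add_one_le_exp (-c)
      rw [Real.exp_neg, ← hC, inv_eq_one_div] at this; linarith
    have hCc : C - 1 ≤ C * c := by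
      have := mul_le_mul_of_nonneg_left hCb hCpos.le
      rw [mul_one_div, div_self (ne_of_gt hCpos)] at this
      nlinarith
    have hsq : c ≤ (E - 1) ^ 2 := by
      have h1 : 1 / σ ≤ E - 1 := by linarith
      have h2 : (0:ℝ) < 1 / σ := by positivity
      have : (1/σ)^2 ≤ (E-1)^2 := by nlinarith
      calc c = (1/σ)^2 := by rw [hc]; field_simp
        _ ≤ _ := this
    have heq : Real.exp (-(α + c)) = 1 / (E * C) := by
      rw [Real.exp_neg, Real.exp_add, ← hE, ← hC, inv_eq_one_div]
    rw [heq]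
    rw [show E + 1 / (E * C) = (E^2 * C + 1) / (E * C) by field_simp,
      le_div_iff₀ (by positivity)]
    nlinarith [mul_le_mul_of_nonneg_left hsq hCpos.le]
  nlinarith [Gf_pos σ x (t+1), key]

lemma alt_tsum_nonneg (d : ℕ → ℝ) (hsd : Summable d) (hnn : ∀ j, 0 ≤ d j)
    (hanti : ∀ j, d (j + 1) ≤ d j) : 0 ≤ ∑' j, (-1 : ℝ) ^ j * d j := by
  have hinj2 : Function.Injective (fun k : ℕ => 2 * k) := fun a b h => by dsimp only at h; omega
  have hinj2' : Function.Injective (fun k : ℕ => 2 * k + 1) := fun a b h => by dsimp only at h; omega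
  have hse : Summable (fun k => d (2 * k)) := hsd.comp_injective hinj2
  have hso : Summable (fun k => d (2 * k + 1)) := hsd.comp_injective hinj2'
  have he : Summable (fun k => (-1 : ℝ) ^ (2 * k) * d (2 * k)) := by
    apply hse.congr; intro k; simp [pow_mul]
  have ho : Summable (fun k => (-1 : ℝ) ^ (2 * k + 1) * d (2 * k + 1)) := by
    apply hso.neg.congr; intro k; simp [pow_mul, pow_succ]
  rw [← tsum_even_add_odd (f := fun j => (-1:ℝ)^j * d j) he ho]
  have h1 : ∑' k, (-1 : ℝ) ^ (2 * k) * d (2 * k) = ∑' k, d (2 * k) := by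
    apply tsum_congr; intro k; simp [pow_mul]
  have h2 : ∑' k, (-1 : ℝ) ^ (2 * k + 1) * d (2 * k + 1) = -∑' k, d (2 * k + 1) := by
    rw [← tsum_neg]; apply tsum_congr; intro k; simp [pow_mul, pow_succ]
  rw [h1, h2]
  have : ∑' k, d (2 * k + 1) ≤ ∑' k, d (2 * k) := by
    apply Summable.tsum_le_tsum _ hso hse
    intro k; have := hanti (2 * k); simpa using this
  linarith

lemma tail_half (b : ℕ → ℝ) (hs : Summable b) (hnn : ∀ j, 0 ≤ b j)
    (hanti : ∀ j, b (j + 1) ≤ b j) (hconv : ∀ j, 2 * b (j + 1) ≤ b j + b (j + 2)) :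
    b 0 / 2 ≤ ∑' j, (-1 : ℝ) ^ j * b j := by
  have hs1 : Summable (fun j => b (j + 1)) := (summable_nat_add_iff 1).2 hs
  have hs2 : Summable (fun j => b (j + 2)) := (summable_nat_add_iff 2).2 hs
  have hsf : Summable (fun j => (-1 : ℝ) ^ j * b j) := by
    apply Summable.of_norm_bounded (g := b) hs
    intro j
    rw [norm_mul, norm_pow, norm_neg, norm_one, one_pow, one_mul]
    exact (abs_of_nonneg (hnn j)).le
  have hsg : Summable (fun j => (-1 : ℝ) ^ j * b (j + 1)) := by
    apply Summable.of_norm_bounded (g := _) hs1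
    intro j
    rw [norm_mul, norm_pow, norm_neg, norm_one, one_pow, one_mul]
    exact (abs_of_nonneg (hnn (j+1))).le
  set S := ∑' j, (-1 : ℝ) ^ j * b j with hS
  set T := ∑' j, (-1 : ℝ) ^ j * b (j + 1) with hT
  have h0 : S = b 0 - T := by
    rw [hS, Summable.tsum_eq_zero_add hsf]
    simp only [pow_zero, one_mul]
    rw [tsum_congr (fun j : ℕ => show (-1:ℝ)^(j+1) * b (j+1) = -((-1)^j * b (j+1)) by ring),
      tsum_neg]
    ring
  set d : ℕ → ℝ := fun j => b j - b (j + 1) with hd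
  have hsd : Summable d := hs.sub hs1
  have hD : S - T = ∑' j, (-1 : ℝ) ^ j * d j := by
    rw [hS, hT, ← Summable.tsum_sub hsf hsg]
    apply tsum_congr; intro j; rw [hd]; ring
  have hDnn : 0 ≤ ∑' j, (-1 : ℝ) ^ j * d j := by
    apply alt_tsum_nonneg d hsd
    · intro j; rw [hd]; simp only; linarith [hanti j]
    · intro j; rw [hd]; simp only; linarith [hconv j]
  linarith

lemma head_nonneg (a : ℕ → ℝ) (hanti : ∀ j, a (j + 1) ≤ a j) (m : ℕ) :
    0 ≤ ∑ j ∈ Finset.range (2 * m), (-1 : ℝ) ^ j * a j := by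
  induction m with
  | zero => simp
  | succ n ih =>
    rw [show 2 * (n + 1) = 2 * n + 1 + 1 by ring, Finset.sum_range_succ, Finset.sum_range_succ]
    have h1 : ((-1 : ℝ)) ^ (2 * n) = 1 := by simp [pow_mul]
    have h2 : ((-1 : ℝ)) ^ (2 * n + 1) = -1 := by simp [pow_succ, h1]
    rw [h1, h2]
    have := hanti (2 * n)
    nlinarith

theorem stmt13 (σ f : ℝ) (hσ : 2 ≤ σ) (hf : f ∈ Set.Icc (-(1:ℝ)/2) (1/2)) :
    (1 / 2) * Real.exp (-((σ + 1 - f) ^ 2 + 2 * (1 + f) * (σ + 1 - f)) / (2 * σ ^ 2)) ≤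
      pw σ (1 + f) ∧
    (0.05 : ℝ) * Real.exp (1 / σ ^ 2) ≤
      (1 / 2) * Real.exp (-((σ + 1 - f) ^ 2 + 2 * (1 + f) * (σ + 1 - f)) / (2 * σ ^ 2)) := by
  obtain ⟨hf1, hf2⟩ := hf
  have hσ0 : (0:ℝ) < σ := by linarith
  have hσ2 : (0:ℝ) < σ ^ 2 := by positivity
  constructor
  · -- part 1
    set x : ℝ := 1 + f with hxdef
    have hx0 : (1:ℝ)/2 ≤ x := by rw [hxdef]; linarith
    have hx3 : x ≤ 3/2 := by rw [hxdef]; linarith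
    set a : ℕ → ℝ := fun j => Gf σ x ((j : ℝ) + 1) with ha
    have hpw : pw σ x = ∑' j, (-1 : ℝ) ^ j * a j := rfl
    have hGoal : (1:ℝ)/2 * Real.exp (-((σ + 1 - f) ^ 2 + 2 * x * (σ + 1 - f)) / (2 * σ ^ 2))
        = Gf σ x (σ + 1 - f) / 2 := by rw [Gf]; ring
    -- antitone of a
    have hanti : ∀ j : ℕ, a (j + 1) ≤ a j := by
      intro j
      show Gf σ x (((j + 1 : ℕ) : ℝ) + 1) ≤ Gf σ x ((j : ℝ) + 1)
      push_cast
      exact Gf_anti hσ0 (by linarith) (by positivity) (by linarith)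
    -- summability of a
    have hnn : ∀ j : ℕ, 0 ≤ a j := fun j => (Gf_pos σ x _).le
    have hsa : Summable a := by
      have hr1 : Real.exp (-(1 / (2 * σ ^ 2))) < 1 := by
        rw [Real.exp_lt_one_iff, neg_lt_zero]; positivity
      apply Summable.of_nonneg_of_le hnn (fun j => ?_)
        (summable_geometric_of_lt_one (Real.exp_pos _).le hr1)
      show Gf σ x ((j : ℝ) + 1) ≤ Real.exp (-(1 / (2 * σ ^ 2))) ^ j
      rw [Gf, ← Real.exp_nat_mul]
      apply Real.exp_le_exp.2
      have hj : (0:ℝ) ≤ (j:ℝ) := Nat.cast_nonneg j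
      have hA : (j:ℝ) ≤ ((j:ℝ) + 1) ^ 2 + 2 * x * ((j:ℝ) + 1) := by
        nlinarith [mul_nonneg (by linarith : (0:ℝ) ≤ x) (by linarith : (0:ℝ) ≤ (j:ℝ) + 1)]
      rw [show (j:ℝ) * -(1 / (2 * σ ^ 2)) = -(j:ℝ) / (2 * σ ^ 2) by ring,
        div_le_div_iff₀ (by positivity) (by positivity)]
      nlinarith [mul_le_mul_of_nonneg_right hA (by positivity : (0:ℝ) ≤ 2 * σ ^ 2)]
    have hsf : Summable (fun j => (-1 : ℝ) ^ j * a j) := by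
      apply Summable.of_norm_bounded (g := a) hsa
      intro j
      rw [norm_mul, norm_pow, norm_neg, norm_one, one_pow, one_mul]
      exact (abs_of_nonneg (hnn j)).le
    set m : ℕ := ⌈(σ - 2 - f) / 2⌉₊ with hm
    have hm1 : σ - 1 - f ≤ 2 * (m : ℝ) + 1 := by
      have h := Nat.le_ceil ((σ - 2 - f) / 2)
      rw [← hm] at h
      linarith
    have hm2 : 2 * (m : ℝ) + 1 ≤ σ + 1 - f := by
      by_cases h : (σ - 2 - f) / 2 ≤ 0
      · have h0 : m = 0 := by rw [hm]; exact Nat.ceil_eq_zero.2 h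
        rw [h0]; push_cast; linarith
      · push_neg at h
        have h2 := Nat.ceil_lt_add_one (le_of_lt h)
        rw [← hm] at h2
        linarith
    set b : ℕ → ℝ := fun j => a (j + 2 * m) with hb
    have hb0 : b 0 = Gf σ x (2 * (m : ℝ) + 1) := by
      show Gf σ x (((0 + 2 * m : ℕ) : ℝ) + 1) = _
      push_cast; ring_nf
    have hbs : Summable b := (summable_nat_add_iff (2 * m)).2 hsa
    have hbnn : ∀ j, 0 ≤ b j := fun j => hnn _
    have hbanti : ∀ j, b (j + 1) ≤ b j := by
      intro j
      show a (j + 1 + 2 * m) ≤ a (j + 2 * m)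
      rw [show j + 1 + 2 * m = (j + 2 * m) + 1 by omega]
      exact hanti _
    have hbconv : ∀ j, 2 * b (j + 1) ≤ b j + b (j + 2) := by
      intro j
      have hcond : σ ≤ ((j : ℝ) + 2 * (m : ℝ) + 1) + x + 1 / 2 := by
        have := Nat.cast_nonneg (α := ℝ) j
        rw [hxdef]; linarith
      have h := Gf_conv (σ := σ) (x := x) (t := (j : ℝ) + 2 * (m : ℝ) + 1) hσ0
        (by linarith) (by positivity) hcond
      have e1 : ((j + 1 + 2 * m : ℕ) : ℝ) + 1 = ((j : ℝ) + 2 * (m : ℝ) + 1) + 1 := by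
        push_cast; ring
      have e2 : ((j + 2 * m : ℕ) : ℝ) + 1 = (j : ℝ) + 2 * (m : ℝ) + 1 := by
        push_cast; ring
      have e3 : ((j + 2 + 2 * m : ℕ) : ℝ) + 1 = ((j : ℝ) + 2 * (m : ℝ) + 1) + 2 := by
        push_cast; ring
      show 2 * Gf σ x (((j + 1 + 2 * m : ℕ) : ℝ) + 1) ≤
        Gf σ x (((j + 2 * m : ℕ) : ℝ) + 1) + Gf σ x (((j + 2 + 2 * m : ℕ) : ℝ) + 1)
      rw [e1, e2, e3]
      exact h
    have htail := tail_half b hbs hbnn hbanti hbconv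
    have htail_eq : ∑' j, (-1 : ℝ) ^ (j + 2 * m) * a (j + 2 * m) = ∑' j, (-1 : ℝ) ^ j * b j := by
      apply tsum_congr
      intro j
      rw [hb]
      simp [pow_add, pow_mul]
    have hsplit := Summable.sum_add_tsum_nat_add (f := fun j => (-1 : ℝ) ^ j * a j) (2 * m) hsf
    have hhead := head_nonneg a hanti m
    have hmono : Gf σ x (σ + 1 - f) ≤ b 0 := by
      rw [hb0]
      exact Gf_anti hσ0 (by linarith) (by positivity) hm2
    rw [hGoal, hpw, ← hsplit]
    beta_reduce
    rw [htail_eq]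
    linarith [htail, hhead, hmono]
  · -- part 2
    have hexp23 : Real.exp 2.3 ≤ 10 := by
      have h1 : Real.exp 1 ≤ 2.7182818286 := Real.exp_one_lt_d9.le
      have h23 : Real.exp 23 ≤ 10 ^ (10:ℕ) := by
        calc Real.exp 23 = Real.exp 1 ^ (23:ℕ) := by
              rw [← Real.exp_nat_mul]; norm_num
          _ ≤ 2.7182818286 ^ (23:ℕ) := pow_le_pow_left₀ (Real.exp_pos 1).le h1 23
          _ ≤ 10 ^ (10:ℕ) := by norm_num
      have hp : Real.exp 2.3 ^ (10:ℕ) = Real.exp 23 := by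
        rw [← Real.exp_nat_mul]; norm_num
      apply le_of_pow_le_pow_left₀ (n := 10) (by norm_num) (by norm_num)
      rw [hp]; exact h23
    set E : ℝ := (σ + 1 - f) ^ 2 + 2 * (1 + f) * (σ + 1 - f) with hE
    have hlog : 1 / σ ^ 2 + E / (2 * σ ^ 2) ≤ 2.3 := by
      rw [show 1 / σ ^ 2 + E / (2 * σ ^ 2) = (2 + E) / (2 * σ ^ 2) by field_simp,
        div_le_iff₀ (by positivity)]
      rw [hE]
      nlinarith [sq_nonneg (σ - 2), sq_nonneg f, sq_nonneg (σ*f)]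
    have key : Real.exp (1 / σ ^ 2) ≤ 10 * Real.exp (-E / (2 * σ ^ 2)) := by
      have hsplit : Real.exp (1 / σ ^ 2)
          = Real.exp (1 / σ ^ 2 + E / (2 * σ ^ 2)) * Real.exp (-E / (2 * σ ^ 2)) := by
        rw [← Real.exp_add]; congr 1; ring
      rw [hsplit]
      apply mul_le_mul_of_nonneg_right _ (Real.exp_pos _).le
      calc Real.exp (1 / σ ^ 2 + E / (2 * σ ^ 2)) ≤ Real.exp 2.3 := Real.exp_le_exp.2 hlog
        _ ≤ 10 := hexp23
    linarith [key]
end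

section
/- Fix σ ≥ 1 and f ∈ [-1/2, 1/2]. The Markov kernel on f + ℤ with steps in {-1, +1, +2} defined as follows preserves the discrete Gaussian measure with mass at n+f proportional to exp(-(n+f)²/(2σ²)): for n ≥ 2, state n+f moves to n+1+f with probability p_σ(n+f), else to n-1+f; for n ≥ 1, state -n+f moves to -n-1+f with probability p_σ(n-f), else to -n+1+f; state f moves to 1+f with probability p_σ(f), to -1+f with probability p_σ(-f), and to 2+f with probability r_σ(f); state 1+f moves to 2+f with probability p_σ(1+f) - r_σ(f)·exp((2f+1)/(2σ²)), else to f. -/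
open Real

/-- Transition kernel of the `±1, 2` walk on `f + ℤ` (states indexed by `ℤ`). -/
noncomputable def ramanujanKernel (σ f : ℝ) (n m : ℤ) : ℝ :=
  if 2 ≤ n then
    (if m = n + 1 then pw σ ((n : ℝ) + f)
     else if m = n - 1 then 1 - pw σ ((n : ℝ) + f) else 0)
  else if n ≤ -1 then
    (if m = n - 1 then pw σ (-(n : ℝ) - f)
     else if m = n + 1 then 1 - pw σ (-(n : ℝ) - f) else 0)
  else if n = 0 then
    (if m = 1 then pw σ f
     else if m = -1 then pw σ (-f)
     else if m = 2 then rw' σ f else 0)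
  else
    (if m = 2 then pw σ (1 + f) - rw' σ f * Real.exp ((2 * f + 1) / (2 * σ ^ 2))
     else if m = 0 then 1 - (pw σ (1 + f) - rw' σ f * Real.exp ((2 * f + 1) / (2 * σ ^ 2)))
     else 0)

noncomputable def G (σ x : ℝ) : ℝ := Real.exp (-x ^ 2 / (2 * σ ^ 2))

lemma G_pos (σ x : ℝ) : 0 < G σ x := Real.exp_pos _

lemma G_neg (σ x : ℝ) : G σ (-x) = G σ x := by rw [G, G, neg_sq]

lemma summable_G (σ x : ℝ) (hσ : 0 < σ) :
    Summable (fun j : ℕ => G σ (x + ((j : ℝ) + 1))) := by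
  have h2 : (0:ℝ) < 2 * σ ^ 2 := by positivity
  have hgeo : Summable (fun j : ℕ =>
      Real.exp (|x| / (2 * σ ^ 2)) * Real.exp (-(1 / (2 * σ ^ 2))) ^ j) :=
    (summable_geometric_of_lt_one (Real.exp_nonneg _)
      (Real.exp_lt_one_iff.2 (neg_lt_zero.2 (by positivity)))).mul_left _
  refine Summable.of_nonneg_of_le (fun j => (G_pos σ _).le) (fun j => ?_) hgeo
  rw [← Real.exp_nat_mul, ← Real.exp_add, G]
  apply Real.exp_le_exp.2
  have hr : |x| / (2 * σ ^ 2) + (j : ℝ) * -(1 / (2 * σ ^ 2)) = (|x| - j) / (2 * σ ^ 2) := by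
    field_simp; ring
  rw [hr, div_le_div_iff₀ h2 h2]
  have h1 : -x ≤ |x| := neg_le_abs x
  nlinarith [sq_nonneg ((x + (j:ℝ) + 1/2) * σ), sq_nonneg σ, sq_nonneg (x + (j:ℝ) + 1/2)]

noncomputable def Tt (σ x : ℝ) : ℝ := ∑' j : ℕ, (-1 : ℝ) ^ j * G σ (x + ((j : ℝ) + 1))

lemma summable_sG (σ x : ℝ) (hσ : 0 < σ) :
    Summable (fun j : ℕ => (-1 : ℝ) ^ j * G σ (x + ((j : ℝ) + 1))) := by
  refine Summable.of_abs ?_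
  have : ∀ j : ℕ, |(-1 : ℝ) ^ j * G σ (x + ((j : ℝ) + 1))| = G σ (x + ((j : ℝ) + 1)) := by
    intro j
    rw [abs_mul, abs_pow, abs_neg, abs_one, one_pow, one_mul, abs_of_pos (G_pos σ _)]
  simpa [this] using summable_G σ x hσ

lemma G_mul_pw (σ x : ℝ) (hσ : 0 < σ) : G σ x * pw σ x = Tt σ x := by
  rw [pw, Tt, ← tsum_mul_left]
  congr 1; funext j
  rw [← mul_assoc, mul_comm (G σ x), mul_assoc]
  congr 1
  rw [G, G, ← Real.exp_add]
  congr 1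
  have h2 : (2 * σ ^ 2) ≠ 0 := by positivity
  field_simp
  ring

lemma T_rec (σ x : ℝ) (hσ : 0 < σ) : Tt σ x = G σ (x + 1) - Tt σ (x + 1) := by
  rw [Tt, Summable.tsum_eq_zero_add (summable_sG σ x hσ)]
  have h0 : (-1 : ℝ) ^ (0:ℕ) * G σ (x + (((0:ℕ) : ℝ) + 1)) = G σ (x + 1) := by norm_num
  rw [h0]
  congr 1
  rw [Tt, ← tsum_neg]
  congr 1; funext j
  push_cast
  rw [show x + ((j : ℝ) + 1 + 1) = x + 1 + ((j:ℝ) + 1) by ring, pow_succ]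
  ring

lemma key (σ a b c : ℝ) (hσ : 0 < σ) (h1 : b = a + 1) (h2 : c = a + 2) :
    G σ a * pw σ a + G σ c * (1 - pw σ c) = G σ b := by
  subst h1 h2
  rw [G_mul_pw σ a hσ, mul_one_sub, G_mul_pw σ _ hσ]
  have ha : Tt σ a = G σ (a + 1) - Tt σ (a + 1) := T_rec σ a hσ
  have hb : Tt σ (a + 1) = G σ (a + 1 + 1) - Tt σ (a + 1 + 1) := T_rec σ (a + 1) hσ
  rw [show a + 2 = a + 1 + 1 by ring] at *
  linarith

lemma rw_eq (σ f : ℝ) (hσ : 0 < σ) :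
    G σ f * rw' σ f = G σ f - Tt σ f - Tt σ (-f) := by
  set A : ℤ → ℝ := fun j => (-1 : ℝ) ^ j * G σ (f + (j : ℝ)) with hA
  have hA1 : ∀ n : ℕ, A (n : ℤ) = (-1 : ℝ) ^ n * G σ (f + (n : ℝ)) := by
    intro n; simp [hA, zpow_natCast]
  have hA2 : ∀ n : ℕ, A (-((n : ℤ) + 1)) = -((-1 : ℝ) ^ n * G σ (-f + ((n : ℝ) + 1))) := by
    intro n
    have hz : (-1 : ℝ) ^ (-((n : ℤ) + 1)) = (-1 : ℝ) ^ (n + 1) := by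
      rw [show -((n : ℤ) + 1) = -(((n + 1 : ℕ)) : ℤ) by push_cast; ring,
        zpow_neg, zpow_natCast, ← inv_pow, inv_neg, inv_one]
    simp only [hA]
    rw [hz]
    push_cast
    rw [show f + -((n : ℝ) + 1) = -(-f + ((n : ℝ) + 1)) by ring, G_neg, pow_succ]
    ring
  have s1 : Summable (fun n : ℕ => A (n : ℤ)) := by
    refine ((summable_sG σ (f - 1) hσ).congr ?_)
    intro n
    rw [hA1, show f - 1 + ((n : ℝ) + 1) = f + (n : ℝ) by ring]
  have s2 : Summable (fun n : ℕ => A (-((n : ℤ) + 1))) := by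
    refine ((summable_sG σ (-f) hσ).neg.congr ?_)
    intro n; rw [hA2]
  have hmain : G σ f * rw' σ f = ∑' j : ℤ, A j := by
    rw [rw', ← tsum_mul_left]
    congr 1; funext j
    simp only [hA]
    rw [← mul_assoc, mul_comm (G σ f), mul_assoc]
    congr 1
    rw [G, G, ← Real.exp_add]
    congr 1
    field_simp
    ring
  rw [hmain, tsum_of_nat_of_neg_add_one s1 s2]
  have e1 : ∑' n : ℕ, A (n : ℤ) = G σ f - Tt σ f := by
    rw [tsum_congr hA1, Summable.tsum_eq_zero_add]
    · have h0 : (-1 : ℝ) ^ (0 : ℕ) * G σ (f + ((0:ℕ) : ℝ)) = G σ f := by norm_num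
      have htail : ∑' (b : ℕ), (-1 : ℝ) ^ (b + 1) * G σ (f + ((b + 1 : ℕ) : ℝ)) =
          -∑' j : ℕ, (-1 : ℝ) ^ j * G σ (f + ((j : ℝ) + 1)) := by
        rw [← tsum_neg]
        congr 1; funext n
        push_cast
        rw [pow_succ]
        ring
      rw [h0, htail, Tt]
      ring
    · refine ((summable_sG σ (f - 1) hσ).congr ?_)
      intro n
      rw [show f - 1 + ((n : ℝ) + 1) = f + (n : ℝ) by ring]
  have e2 : ∑' n : ℕ, A (-((n : ℤ) + 1)) = -Tt σ (-f) := by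
    rw [tsum_congr hA2, tsum_neg, Tt]
  rw [e1, e2]
  ring

theorem stmt14 (σ f : ℝ) (hσ : 1 ≤ σ) (hf : f ∈ Set.Icc (-(1:ℝ)/2) (1/2)) :
    ∀ m : ℤ,
      ∑' n : ℤ, Real.exp (-((n : ℝ) + f) ^ 2 / (2 * σ ^ 2)) * ramanujanKernel σ f n m =
        Real.exp (-((m : ℝ) + f) ^ 2 / (2 * σ ^ 2)) := by
  intro m
  have hσ0 : (0:ℝ) < σ := lt_of_lt_of_le one_pos hσ
  have hG : ∀ y : ℝ, Real.exp (-y ^ 2 / (2 * σ ^ 2)) = G σ y := fun _ => rfl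
  simp only [hG]
  have he : G σ (1 + f) * Real.exp ((2 * f + 1) / (2 * σ ^ 2)) = G σ f := by
    rw [G, G, ← Real.exp_add]
    congr 1
    field_simp
    ring
  obtain h3 | h2 | h1 | h0 | hm1 | hle : 3 ≤ m ∨ m = 2 ∨ m = 1 ∨ m = 0 ∨ m = -1 ∨ m ≤ -2 := by
    omega
  · -- m ≥ 3
    rw [tsum_eq_sum (s := ({m - 1, m + 1} : Finset ℤ)) ?van]
    case van =>
      intro n hn
      simp only [Finset.mem_insert, Finset.mem_singleton] at hn
      push_neg at hn
      unfold ramanujanKernel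
      split_ifs <;> first | (exact mul_zero _) | (exfalso; first | assumption | omega)
    rw [Finset.sum_pair (by omega : m - 1 ≠ m + 1)]
    have k1 : ramanujanKernel σ f (m - 1) m = pw σ (((m - 1 : ℤ) : ℝ) + f) := by
      unfold ramanujanKernel
      rw [if_pos (by omega : (2:ℤ) ≤ m - 1), if_pos (by omega : m = m - 1 + 1)]
    have k2 : ramanujanKernel σ f (m + 1) m = 1 - pw σ (((m + 1 : ℤ) : ℝ) + f) := by
      unfold ramanujanKernel
      rw [if_pos (by omega : (2:ℤ) ≤ m + 1), if_neg (by omega : ¬ m = m + 1 + 1),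
        if_pos (by omega : m = m + 1 - 1)]
    rw [k1, k2]
    push_cast
    exact key σ ((m:ℝ) - 1 + f) ((m:ℝ) + f) ((m:ℝ) + 1 + f) hσ0 (by ring) (by ring)
  · -- m = 2
    subst h2
    rw [tsum_eq_sum (s := ({0, 1, 3} : Finset ℤ)) ?van]
    case van =>
      intro n hn
      simp only [Finset.mem_insert, Finset.mem_singleton] at hn
      push_neg at hn
      unfold ramanujanKernel
      split_ifs <;> first | (exact mul_zero _) | (exfalso; first | assumption | omega)
    have k0 : ramanujanKernel σ f 0 2 = rw' σ f := by
      unfold ramanujanKernel; norm_num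
    have k1 : ramanujanKernel σ f 1 2
        = pw σ (1 + f) - rw' σ f * Real.exp ((2 * f + 1) / (2 * σ ^ 2)) := by
      unfold ramanujanKernel; norm_num
    have k3 : ramanujanKernel σ f 3 2 = 1 - pw σ ((3:ℝ) + f) := by
      unfold ramanujanKernel; norm_num
    rw [Finset.sum_insert (by decide), Finset.sum_insert (by decide), Finset.sum_singleton,
      k0, k1, k3]
    push_cast
    simp only [zero_add]
    have hkey := key σ (1 + f) (2 + f) (3 + f) hσ0 (by ring) (by ring)
    linear_combination hkey - rw' σ f * he
  · -- m = 1
    subst h1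
    rw [tsum_eq_sum (s := ({0, 2} : Finset ℤ)) ?van]
    case van =>
      intro n hn
      simp only [Finset.mem_insert, Finset.mem_singleton] at hn
      push_neg at hn
      unfold ramanujanKernel
      split_ifs <;> first | (exact mul_zero _) | (exfalso; first | assumption | omega)
    have k0 : ramanujanKernel σ f 0 1 = pw σ f := by
      unfold ramanujanKernel; norm_num
    have k2 : ramanujanKernel σ f 2 1 = 1 - pw σ ((2:ℝ) + f) := by
      unfold ramanujanKernel; norm_num
    rw [Finset.sum_pair (by decide : (0:ℤ) ≠ 2), k0, k2]
    push_cast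
    simp only [zero_add]
    have hkey := key σ f (1 + f) (2 + f) hσ0 (by ring) (by ring)
    linear_combination hkey
  · -- m = 0
    subst h0
    rw [tsum_eq_sum (s := ({-1, 1} : Finset ℤ)) ?van]
    case van =>
      intro n hn
      simp only [Finset.mem_insert, Finset.mem_singleton] at hn
      push_neg at hn
      unfold ramanujanKernel
      split_ifs <;> first | (exact mul_zero _) | (exfalso; first | assumption | omega)
    have kn : ramanujanKernel σ f (-1) 0 = 1 - pw σ (1 - f) := by
      unfold ramanujanKernel
      norm_num
    have k1 : ramanujanKernel σ f 1 0
        = 1 - (pw σ (1 + f) - rw' σ f * Real.exp ((2 * f + 1) / (2 * σ ^ 2))) := by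
      unfold ramanujanKernel; norm_num
    rw [Finset.sum_pair (by decide : (-1:ℤ) ≠ 1), kn, k1]
    push_cast
    simp only [zero_add]
    have hgneg : G σ (-1 + f) = G σ (1 - f) := by
      rw [show (-1:ℝ) + f = -(1 - f) by ring, G_neg]
    have ha := G_mul_pw σ (1 - f) hσ0
    have hb := G_mul_pw σ (1 + f) hσ0
    have hr := rw_eq σ f hσ0
    have t1 := T_rec σ (-f) hσ0
    have t2 := T_rec σ f hσ0
    rw [show -f + 1 = 1 - f by ring] at t1
    rw [show f + 1 = 1 + f by ring] at t2
    linear_combination (1 - pw σ (1 - f)) * hgneg - ha - hb + rw' σ f * he + hr - t1 - t2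
  · -- m = -1
    subst hm1
    rw [tsum_eq_sum (s := ({-2, 0} : Finset ℤ)) ?van]
    case van =>
      intro n hn
      simp only [Finset.mem_insert, Finset.mem_singleton] at hn
      push_neg at hn
      unfold ramanujanKernel
      split_ifs <;> first | (exact mul_zero _) | (exfalso; first | assumption | omega)
    have kn : ramanujanKernel σ f (-2) (-1) = 1 - pw σ (2 - f) := by
      unfold ramanujanKernel
      norm_num
    have k0 : ramanujanKernel σ f 0 (-1) = pw σ (-f) := by
      unfold ramanujanKernel; norm_num
    rw [Finset.sum_pair (by decide : (-2:ℤ) ≠ 0), kn, k0]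
    push_cast
    simp only [zero_add]
    have hg2 : G σ (-2 + f) = G σ (2 - f) := by
      rw [show (-2:ℝ) + f = -(2 - f) by ring, G_neg]
    have hg0 : G σ f = G σ (-f) := (G_neg σ f).symm
    have hg1 : G σ (-1 + f) = G σ (1 - f) := by
      rw [show (-1:ℝ) + f = -(1 - f) by ring, G_neg]
    have hkey := key σ (-f) (1 - f) (2 - f) hσ0 (by ring) (by ring)
    linear_combination hkey + (1 - pw σ (2 - f)) * hg2 + pw σ (-f) * hg0 - hg1
  · -- m ≤ -2
    rw [tsum_eq_sum (s := ({m - 1, m + 1} : Finset ℤ)) ?van]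
    case van =>
      intro n hn
      simp only [Finset.mem_insert, Finset.mem_singleton] at hn
      push_neg at hn
      unfold ramanujanKernel
      split_ifs <;> first | (exact mul_zero _) | (exfalso; first | assumption | omega)
    rw [Finset.sum_pair (by omega : m - 1 ≠ m + 1)]
    have k1 : ramanujanKernel σ f (m - 1) m = 1 - pw σ (-((m - 1 : ℤ) : ℝ) - f) := by
      unfold ramanujanKernel
      rw [if_neg (by omega : ¬ (2:ℤ) ≤ m - 1), if_pos (by omega : m - 1 ≤ -1),
        if_neg (by omega : ¬ m = m - 1 - 1), if_pos (by omega : m = m - 1 + 1)]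
    have k2 : ramanujanKernel σ f (m + 1) m = pw σ (-((m + 1 : ℤ) : ℝ) - f) := by
      unfold ramanujanKernel
      rw [if_neg (by omega : ¬ (2:ℤ) ≤ m + 1), if_pos (by omega : m + 1 ≤ -1),
        if_pos (by omega : m = m + 1 - 1)]
    rw [k1, k2]
    push_cast
    have hkey := key σ (-((m:ℝ) + 1) - f) (-(m:ℝ) - f) (-((m:ℝ) - 1) - f) hσ0
      (by ring) (by ring)
    have hga : G σ ((m:ℝ) + 1 + f) = G σ (-((m:ℝ) + 1) - f) := by
      rw [show -((m:ℝ) + 1) - f = -((m:ℝ) + 1 + f) by ring, G_neg]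
    have hgb : G σ ((m:ℝ) + f) = G σ (-(m:ℝ) - f) := by
      rw [show -(m:ℝ) - f = -((m:ℝ) + f) by ring, G_neg]
    have hgc : G σ ((m:ℝ) - 1 + f) = G σ (-((m:ℝ) - 1) - f) := by
      rw [show -((m:ℝ) - 1) - f = -((m:ℝ) - 1 + f) by ring, G_neg]
    linear_combination hkey + pw σ (-((m:ℝ) + 1) - f) * hga
      + (1 - pw σ (-((m:ℝ) - 1) - f)) * hgc - hgb
end

section
/- For f ∈ [-1/2, 1/2], 1 - r_1(f) ≥ 0.9639, where r_1(f) = ∑_{j∈ℤ} (-1)^j exp(-(j²+2fj)/2). -/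
open Real

private lemma am_gm_pow5 (y s : ℝ) (hy0 : 0 < y) (hys : y * s = 1) :
    2 ≤ s ^ 5 + y ^ 5 := by
  have h5 : y ^ 5 * s ^ 5 = 1 := by rw [← mul_pow, hys, one_pow]
  have hy5 : 0 < y ^ 5 := pow_pos hy0 5
  nlinarith [sq_nonneg (y ^ 5 - 1), hy5, h5]

private lemma xpow_bounds (x : ℝ) (hx0 : 0 < x)
    (hx2l : (0.36787944115 : ℝ) ≤ x ^ 2) (hx2u : x ^ 2 ≤ 0.36787944120) :
    (0.6065306595 : ℝ) ≤ x ∧ x ≤ (0.6065306600 : ℝ) ∧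
    (0.1353352831 : ℝ) ≤ x ^ 4 ∧ x ^ 4 ≤ (0.1353352834 : ℝ) ∧
    (0.0111089963 : ℝ) ≤ x ^ 9 ∧ x ^ 9 ≤ (0.0111089968 : ℝ) ∧
    (0.000335462 : ℝ) ≤ x ^ 16 ∧ x ^ 16 ≤ (0.000335463 : ℝ) := by
  have hxl : (0.6065306595 : ℝ) ≤ x := by nlinarith
  have hxu : x ≤ (0.6065306600 : ℝ) := by nlinarith
  have hx4l : (0.1353352831 : ℝ) ≤ x ^ 4 := by nlinarith
  have hx4u : x ^ 4 ≤ (0.1353352834 : ℝ) := by nlinarith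
  have hx8l : (0.0183156388 : ℝ) ≤ x ^ 8 := by nlinarith [hx4l, hx4u, sq_nonneg (x ^ 4)]
  have hx8u : x ^ 8 ≤ (0.0183156390 : ℝ) := by nlinarith [hx4l, hx4u]
  have hx9l : (0.0111089963 : ℝ) ≤ x ^ 9 := by nlinarith [hx8l, hxl, pow_pos hx0 8]
  have hx9u : x ^ 9 ≤ (0.0111089968 : ℝ) := by nlinarith [hx8u, hxu, pow_pos hx0 8]
  have hx16l : (0.000335462 : ℝ) ≤ x ^ 16 := by nlinarith [hx8l, hx8u]
  have hx16u : x ^ 16 ≤ (0.000335463 : ℝ) := by nlinarith [hx8l, hx8u]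
  exact ⟨hxl, hxu, hx4l, hx4u, hx9l, hx9u, hx16l, hx16u⟩

private lemma c_bounds (x y s : ℝ) (hys : y * s = 1) (hy0 : 0 < y) (hs0 : 0 < s)
    (hxy : x ≤ y) (hxs : x ≤ s)
    (hxl : (0.6065306595 : ℝ) ≤ x) (hx2u : x ^ 2 ≤ (0.36787944120 : ℝ)) :
    2 ≤ s + y ∧ s + y ≤ 2.2553 := by
  constructor
  · nlinarith [sq_nonneg (y - 1), hy0, hys]
  · have hp := mul_nonneg (sub_nonneg.2 hxy) (sub_nonneg.2 hxs)
    nlinarith [hp, hys, hx2u, hxl, hy0, hs0]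

private lemma main_num (x c : ℝ) (hx0 : 0 < x)
    (hx2l : (0.36787944115 : ℝ) ≤ x ^ 2) (hx2u : x ^ 2 ≤ 0.36787944120)
    (hc2 : 2 ≤ c) (hcu : c ≤ 2.2553) :
    1 - x * c + x ^ 4 * (c ^ 2 - 2) - x ^ 9 * (c ^ 3 - 3 * c)
      + x ^ 16 * (c ^ 4 - 4 * c ^ 2 + 2) ≤ 0.036099 := by
  obtain ⟨hxl, hxu, hx4l, hx4u, hx9l, hx9u, hx16l, hx16u⟩ := xpow_bounds x hx0 hx2l hx2u
  have ht0 : 0 ≤ c - 2 := by linarith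
  have p5 : (c - 2) ^ 2 ≤ 0.2553 * (c - 2) := by nlinarith
  have p8 : (c - 2) ^ 4 ≤ 0.017 * (c - 2) := by
    nlinarith [pow_nonneg ht0 3, sq_nonneg (c - 2)]
  have hkey : 1 - x * c + x ^ 4 * (c ^ 2 - 2) - x ^ 9 * (c ^ 3 - 3 * c)
      + x ^ 16 * (c ^ 4 - 4 * c ^ 2 + 2)
      = (1 - 2 * x + 2 * x ^ 4 - 2 * x ^ 9 + 2 * x ^ 16)
        + (c - 2) * (-x + 4 * x ^ 4 - 9 * x ^ 9 + 16 * x ^ 16)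
        + (c - 2) ^ 2 * (x ^ 4 - 6 * x ^ 9 + 20 * x ^ 16)
        + (c - 2) ^ 3 * (-(x ^ 9) + 8 * x ^ 16)
        + (c - 2) ^ 4 * x ^ 16 := by ring
  have m1 : (c - 2) * (-x + 4 * x ^ 4 - 9 * x ^ 9 + 16 * x ^ 16) ≤ (c - 2) * (-0.159) :=
    mul_le_mul_of_nonneg_left (by linarith) ht0
  have m2 : (c - 2) ^ 2 * (x ^ 4 - 6 * x ^ 9 + 20 * x ^ 16) ≤ (c - 2) ^ 2 * 0.0768 :=
    mul_le_mul_of_nonneg_left (by linarith) (sq_nonneg _)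
  have m3 : (c - 2) ^ 3 * (-(x ^ 9) + 8 * x ^ 16) ≤ 0 :=
    mul_nonpos_of_nonneg_of_nonpos (pow_nonneg ht0 3) (by linarith)
  have m4 : (c - 2) ^ 4 * x ^ 16 ≤ (c - 2) ^ 4 * 0.000335463 :=
    mul_le_mul_of_nonneg_left (by linarith) (pow_nonneg ht0 4)
  have e5 : (c - 2) ^ 2 * 0.0768 ≤ 0.0768 * (0.2553 * (c - 2)) := by linarith
  have e8 : (c - 2) ^ 4 * 0.000335463 ≤ 0.000335463 * (0.017 * (c - 2)) := by nlinarith [p8]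
  rw [hkey]
  linarith [m1, m2, m3, m4, e5, e8, ht0]

set_option maxHeartbeats 1000000 in
theorem stmt15 (f : ℝ) (hf : f ∈ Set.Icc (-(1:ℝ)/2) (1/2)) :
    (0.9639 : ℝ) ≤ 1 - rw' 1 f := by
  obtain ⟨hf1, hf2⟩ := hf
  have hf1' : -(1/2 : ℝ) ≤ f := by linarith only [hf1]
  set x : ℝ := Real.exp (-(1/2)) with hxdef
  set y : ℝ := Real.exp f with hydef
  set s : ℝ := Real.exp (-f) with hsdef
  have hx0 : (0:ℝ) < x := Real.exp_pos _
  have hy0 : (0:ℝ) < y := Real.exp_pos _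
  have hs0 : (0:ℝ) < s := Real.exp_pos _
  have hys : y * s = 1 := by rw [hydef, hsdef, ← Real.exp_add]; simp
  have hxy : x ≤ y := Real.exp_le_exp.mpr (by linarith)
  have hxs : x ≤ s := Real.exp_le_exp.mpr (by linarith)
  have hx1 : x < 1 := by rw [hxdef, Real.exp_lt_one_iff]; norm_num
  have hxs1 : x * s ≤ 1 := by
    rw [hxdef, hsdef, ← Real.exp_add, Real.exp_le_one_iff]; linarith
  have hxy1 : x * y ≤ 1 := by
    rw [hxdef, hydef, ← Real.exp_add, Real.exp_le_one_iff]; linarith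
  have hx2 : x ^ 2 = Real.exp (-1) := by
    rw [hxdef, pow_two, ← Real.exp_add]; norm_num
  have hxe : x ^ 2 * Real.exp 1 = 1 := by
    rw [hx2, ← Real.exp_add]; norm_num
  have hel := Real.exp_one_gt_d9
  have heu := Real.exp_one_lt_d9
  have hep : (0:ℝ) < Real.exp 1 := Real.exp_pos 1
  have hx2l : (0.36787944115 : ℝ) ≤ x ^ 2 := by nlinarith [hxe, heu, hep]
  have hx2u : x ^ 2 ≤ (0.36787944120 : ℝ) := by nlinarith [hxe, hel, hep]
  obtain ⟨hxl, hxu, hx4l, hx4u, hx9l, hx9u, hx16l, hx16u⟩ := xpow_bounds x hx0 hx2l hx2u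
  set F : ℤ → ℝ := fun j =>
    (-1 : ℝ) ^ j * Real.exp (-(((j : ℝ) ^ 2 + 2 * f * (j : ℝ)) / (2 * (1:ℝ) ^ 2))) with hFdef
  have hrw : rw' 1 f = ∑' j : ℤ, F j := rfl
  have hsignpos : ∀ n : ℕ, ((-1 : ℝ) ^ ((n : ℤ) + 1)) = (-1 : ℝ) ^ (n + 1) := by
    intro n
    rw [show ((n : ℤ) + 1) = ((n + 1 : ℕ) : ℤ) by push_cast; ring, zpow_natCast]
  have hsignneg : ∀ n : ℕ, ((-1 : ℝ) ^ (-((n : ℤ) + 1))) = (-1 : ℝ) ^ (n + 1) := by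
    intro n
    rw [zpow_neg, hsignpos n, ← inv_pow, inv_neg, inv_one]
  set P : ℕ → ℝ := fun n => x ^ ((n + 1) ^ 2) * s ^ (n + 1) with hPdef
  set Q : ℕ → ℝ := fun n => x ^ ((n + 1) ^ 2) * y ^ (n + 1) with hQdef
  have hFpos : ∀ n : ℕ, F ((n : ℤ) + 1) = (-1 : ℝ) ^ (n + 1) * P n := by
    intro n
    simp only [hFdef, hPdef]
    rw [hsignpos n]
    congr 1
    rw [hsdef, hxdef, ← Real.exp_nat_mul, ← Real.exp_nat_mul, ← Real.exp_add]
    congr 1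
    push_cast
    ring
  have hFneg : ∀ n : ℕ, F (-((n : ℤ) + 1)) = (-1 : ℝ) ^ (n + 1) * Q n := by
    intro n
    simp only [hFdef, hQdef]
    rw [hsignneg n]
    congr 1
    rw [hydef, hxdef, ← Real.exp_nat_mul, ← Real.exp_nat_mul, ← Real.exp_add]
    congr 1
    push_cast
    ring
  have hF0 : F 0 = 1 := by
    simp only [hFdef]
    norm_num
  have hP0 : ∀ n, 0 ≤ P n := fun n =>
    mul_nonneg (pow_nonneg hx0.le _) (pow_nonneg hs0.le _)
  have hQ0 : ∀ n, 0 ≤ Q n := fun n =>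
    mul_nonneg (pow_nonneg hx0.le _) (pow_nonneg hy0.le _)
  have hbound : ∀ (n : ℕ) (z : ℝ), 0 ≤ z → x * z ≤ 1 →
      x ^ ((n + 1) ^ 2) * z ^ (n + 1) ≤ x ^ (n * (n + 1)) := by
    intro n z hz hxz
    have h1 : x ^ ((n + 1) ^ 2) * z ^ (n + 1) = x ^ (n * (n + 1)) * (x * z) ^ (n + 1) := by
      rw [mul_pow, ← mul_assoc, ← pow_add]
      congr 2
      ring
    rw [h1]
    calc x ^ (n * (n + 1)) * (x * z) ^ (n + 1)
        ≤ x ^ (n * (n + 1)) * 1 := by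
          apply mul_le_mul_of_nonneg_left _ (pow_nonneg hx0.le _)
          exact pow_le_one₀ (mul_nonneg hx0.le hz) hxz
      _ = x ^ (n * (n + 1)) := mul_one _
  have hmono : ∀ {a b : ℕ}, a ≤ b → x ^ b ≤ x ^ a := fun h =>
    pow_le_pow_of_le_one hx0.le hx1.le h
  have hPb : ∀ n, P n ≤ x ^ (n * (n + 1)) := fun n => hbound n s hs0.le hxs1
  have hQb : ∀ n, Q n ≤ x ^ (n * (n + 1)) := fun n => hbound n y hy0.le hxy1
  have hgeo : Summable (fun n : ℕ => x ^ n) := summable_geometric_of_lt_one hx0.le hx1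
  have hle_geo : ∀ n : ℕ, n ≤ n * (n + 1) := fun n =>
    Nat.le_mul_of_pos_right n (Nat.succ_pos n)
  have hPsum : Summable P :=
    hgeo.of_nonneg_of_le hP0 (fun n => (hPb n).trans (hmono (hle_geo n)))
  have hQsum : Summable Q :=
    hgeo.of_nonneg_of_le hQ0 (fun n => (hQb n).trans (hmono (hle_geo n)))
  have habs_sgn : ∀ (v : ℕ → ℝ), (∀ n, 0 ≤ v n) → Summable v →
      Summable (fun n : ℕ => (-1 : ℝ) ^ (n + 1) * v n) := by
    intro v hv hvs
    apply Summable.of_abs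
    have h : (fun n : ℕ => |(-1 : ℝ) ^ (n + 1) * v n|) = v := by
      funext n
      rw [abs_mul, abs_pow, abs_neg, abs_one, one_pow, one_mul, abs_of_nonneg (hv n)]
    rw [h]
    exact hvs
  have hPsum' : Summable (fun n : ℕ => (-1 : ℝ) ^ (n + 1) * P n) := habs_sgn P hP0 hPsum
  have hQsum' : Summable (fun n : ℕ => (-1 : ℝ) ^ (n + 1) * Q n) := habs_sgn Q hQ0 hQsum
  have hFpossum : Summable (fun n : ℕ => F ((n : ℤ) + 1)) := by
    have h : (fun n : ℕ => F ((n : ℤ) + 1)) = fun n : ℕ => (-1 : ℝ) ^ (n + 1) * P n := by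
      funext n; exact hFpos n
    rw [h]; exact hPsum'
  have hFnegsum : Summable (fun n : ℕ => F (-((n : ℤ) + 1))) := by
    have h : (fun n : ℕ => F (-((n : ℤ) + 1))) = fun n : ℕ => (-1 : ℝ) ^ (n + 1) * Q n := by
      funext n; exact hFneg n
    rw [h]; exact hQsum'
  set u : ℕ → ℝ := fun n => (-1 : ℝ) ^ (n + 1) * (P n + Q n) with hudef
  have husum : Summable u := by
    have h : u = fun n => (-1 : ℝ) ^ (n + 1) * P n + (-1 : ℝ) ^ (n + 1) * Q n := by
      funext n; rw [hudef]; ring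
    rw [h]
    exact hPsum'.add hQsum'
  have hsplit : rw' 1 f = 1 + ∑' n : ℕ, u n := by
    rw [hrw, tsum_of_add_one_of_neg_add_one hFpossum hFnegsum, hF0]
    have e1 : ∑' n : ℕ, F ((n : ℤ) + 1) = ∑' n : ℕ, (-1 : ℝ) ^ (n + 1) * P n :=
      tsum_congr hFpos
    have e2 : ∑' n : ℕ, F (-((n : ℤ) + 1)) = ∑' n : ℕ, (-1 : ℝ) ^ (n + 1) * Q n :=
      tsum_congr hFneg
    rw [e1, e2]
    have e4 : (∑' n : ℕ, (-1 : ℝ) ^ (n + 1) * P n) + ∑' n : ℕ, (-1 : ℝ) ^ (n + 1) * Q n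
        = ∑' n : ℕ, u n := by
      rw [← Summable.tsum_add hPsum' hQsum']
      apply tsum_congr
      intro n
      rw [hudef]
      ring
    linarith [e4]
  have hsix : ∑' n : ℕ, u n = (∑ n ∈ Finset.range 6, u n) + ∑' k : ℕ, u (k + 6) :=
    (Summable.sum_add_tsum_nat_add 6 husum).symm
  have hx32u : x ^ 32 ≤ (1.2e-7 : ℝ) := by nlinarith [hx16u, pow_nonneg hx0.le 16, hx16l]
  have htail_term : ∀ k : ℕ, |u (k + 6)| ≤ 2 * x ^ 42 * x ^ k := by
    intro k
    have habs : |u (k + 6)| = P (k + 6) + Q (k + 6) := by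
      rw [hudef]
      rw [abs_mul, abs_pow, abs_neg, abs_one, one_pow, one_mul,
        abs_of_nonneg (add_nonneg (hP0 (k + 6)) (hQ0 (k + 6)))]
    rw [habs]
    have h2 : (k + 42) ≤ (k + 6) * (k + 6 + 1) := by
      calc k + 42 ≤ 13 * k + 42 := by omega
        _ ≤ k * k + (13 * k + 42) := Nat.le_add_left _ _
        _ = (k + 6) * (k + 6 + 1) := by ring
    have h3 : x ^ ((k + 6) * (k + 6 + 1)) ≤ x ^ (k + 42) := hmono h2
    have h4 : x ^ (k + 42) = x ^ 42 * x ^ k := by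
      rw [← pow_add]
      congr 1
      omega
    have h5 : P (k + 6) ≤ x ^ 42 * x ^ k := by
      calc P (k + 6) ≤ x ^ ((k + 6) * (k + 6 + 1)) := hPb (k + 6)
        _ ≤ x ^ (k + 42) := h3
        _ = x ^ 42 * x ^ k := h4
    have h6 : Q (k + 6) ≤ x ^ 42 * x ^ k := by
      calc Q (k + 6) ≤ x ^ ((k + 6) * (k + 6 + 1)) := hQb (k + 6)
        _ ≤ x ^ (k + 42) := h3
        _ = x ^ 42 * x ^ k := h4
    linarith only [h5, h6]
  have husum6 : Summable fun k => u (k + 6) := (summable_nat_add_iff 6).mpr husum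
  have hmaj : Summable (fun k : ℕ => 2 * x ^ 42 * x ^ k) := hgeo.mul_left _
  have htail : |∑' k : ℕ, u (k + 6)| ≤ 2 * x ^ 42 * (1 - x)⁻¹ := by
    have hn : Summable fun k : ℕ => ‖u (k + 6)‖ := by
      simpa only [Real.norm_eq_abs] using husum6.abs
    calc |∑' k : ℕ, u (k + 6)| = ‖∑' k : ℕ, u (k + 6)‖ := (Real.norm_eq_abs _).symm
      _ ≤ ∑' k : ℕ, ‖u (k + 6)‖ := norm_tsum_le_tsum_norm hn
      _ = ∑' k : ℕ, |u (k + 6)| := by simp only [Real.norm_eq_abs]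
      _ ≤ ∑' k : ℕ, 2 * x ^ 42 * x ^ k := Summable.tsum_le_tsum htail_term husum6.abs hmaj
      _ = 2 * x ^ 42 * ∑' k : ℕ, x ^ k := tsum_mul_left
      _ = 2 * x ^ 42 * (1 - x)⁻¹ := by rw [tsum_geometric_of_lt_one hx0.le hx1]
  have htailnum : |∑' k : ℕ, u (k + 6)| ≤ 1e-6 := by
    have hipos : (0 : ℝ) < 1 - x := by linarith
    have hi : (1 - x)⁻¹ ≤ (0.39 : ℝ)⁻¹ := by
      gcongr
      linarith

    have hx42 : x ^ 42 ≤ (1.2e-7 : ℝ) := (hmono (by norm_num : 32 ≤ 42)).trans hx32u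
    have hprod : x ^ 42 * (1 - x)⁻¹ ≤ (1.2e-7 : ℝ) * (0.39 : ℝ)⁻¹ :=
      mul_le_mul hx42 hi (inv_nonneg.2 hipos.le) (by norm_num)
    have hnum : (1.2e-7 : ℝ) * (0.39 : ℝ)⁻¹ ≤ 0.4e-6 := by norm_num
    linarith only [htail, hprod, hnum]
  have hexp6 : ∑ n ∈ Finset.range 6, u n
      = -(x * (s + y)) + x ^ 4 * (s ^ 2 + y ^ 2) - x ^ 9 * (s ^ 3 + y ^ 3)
        + x ^ 16 * (s ^ 4 + y ^ 4) - x ^ 25 * (s ^ 5 + y ^ 5) + x ^ 36 * (s ^ 6 + y ^ 6) := by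
    simp only [hudef, hPdef, hQdef, Finset.sum_range_succ, Finset.sum_range_zero]
    norm_num
    ring
  have ha6 : x ^ 36 * (s ^ 6 + y ^ 6) ≤ 2 * x ^ 30 := by
    have h1 : x ^ 36 * s ^ 6 = x ^ 30 * (x * s) ^ 6 := by rw [mul_pow, ← mul_assoc, ← pow_add]
    have h2 : x ^ 36 * y ^ 6 = x ^ 30 * (x * y) ^ 6 := by rw [mul_pow, ← mul_assoc, ← pow_add]
    have h3 : x ^ 30 * (x * s) ^ 6 ≤ x ^ 30 * 1 :=
      mul_le_mul_of_nonneg_left (pow_le_one₀ (mul_nonneg hx0.le hs0.le) hxs1)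
        (pow_nonneg hx0.le 30)
    have h4 : x ^ 30 * (x * y) ^ 6 ≤ x ^ 30 * 1 :=
      mul_le_mul_of_nonneg_left (pow_le_one₀ (mul_nonneg hx0.le hy0.le) hxy1)
        (pow_nonneg hx0.le 30)
    linarith only [h1, h2, h3, h4]
  have h3025 : x ^ 30 ≤ x ^ 25 := hmono (by norm_num)
  have ha5 : 2 * x ^ 25 ≤ x ^ 25 * (s ^ 5 + y ^ 5) := by
    have h := mul_le_mul_of_nonneg_left (am_gm_pow5 y s hy0 hys) (pow_nonneg hx0.le 25)
    linarith only [h]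
  obtain ⟨hc2, hcu⟩ := c_bounds x y s hys hy0 hs0 hxy hxs hxl hx2u
  have hmain := main_num x (s + y) hx0 hx2l hx2u hc2 hcu
  have hid2 : s ^ 2 + y ^ 2 = (s + y) ^ 2 - 2 := by linear_combination (-2 : ℝ) * hys
  have hid3 : s ^ 3 + y ^ 3 = (s + y) ^ 3 - 3 * (s + y) := by
    linear_combination (-3 * (y + s)) * hys
  have hid4 : s ^ 4 + y ^ 4 = (s + y) ^ 4 - 4 * (s + y) ^ 2 + 2 := by
    linear_combination (-6 * (y * s - 1) - 4 - 4 * (y ^ 2 + s ^ 2)) * hys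
  have hrle : rw' 1 f ≤ 0.0361 := by
    rw [hsplit, hsix, hexp6]
    have ht1 : ∑' k : ℕ, u (k + 6) ≤ 1e-6 := le_trans (le_abs_self _) htailnum
    rw [hid2, hid3, hid4]
    linarith only [hmain, ht1, ha6, h3025, ha5, hid2, hid3, hid4]
  linarith only [hrle]
end

section
/- For σ ≥ 1/2, r_σ(0) = ∑_{j∈ℤ} (-1)^j exp(-j²/(2σ²)) ≤ exp(-σ²). -/
open Real

lemma aux_ident (σ : ℝ) (hσ : 0 < σ) :
    rw' σ 0 = Real.sqrt (2 * π * σ ^ 2) *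
      ∑' n : ℤ, Real.exp (-(2 * π ^ 2 * σ ^ 2) * ((n : ℝ) - 1/2) ^ 2) := by
  set r : ℝ := 2 * π * σ ^ 2 with hr
  have hrpos : 0 < r := by positivity
  have ha : 0 < ((r⁻¹ : ℝ) : ℂ).re := by simpa using inv_pos.mpr hrpos
  have key := Complex.tsum_exp_neg_quadratic ha (Complex.I / 2)
  have hL : (∑' n : ℤ, Complex.exp (-(π:ℂ) * ((r⁻¹ : ℝ) : ℂ) * (n:ℂ) ^ 2
      + 2 * (π:ℂ) * (Complex.I / 2) * (n:ℂ))) = ((rw' σ 0 : ℝ) : ℂ) := by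
    rw [rw', Complex.ofReal_tsum]
    refine tsum_congr fun n => ?_
    have h1 : (-(π:ℂ) * ((r⁻¹ : ℝ) : ℂ) * (n:ℂ) ^ 2 + 2 * (π:ℂ) * (Complex.I / 2) * (n:ℂ))
        = ((-(((n:ℝ)^2 + 2 * 0 * (n:ℝ)) / (2 * σ^2)) : ℝ) : ℂ) + (n:ℂ) * ((π:ℂ) * Complex.I) := by
      have hπ : (π:ℂ) ≠ 0 := Complex.ofReal_ne_zero.mpr Real.pi_ne_zero
      have hσc : (σ:ℂ) ≠ 0 := Complex.ofReal_ne_zero.mpr hσ.ne'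
      push_cast [hr]
      field_simp
      ring
    rw [h1, Complex.exp_add, Complex.exp_int_mul, Complex.exp_pi_mul_I]
    push_cast [Complex.ofReal_exp]
    ring
  have hR : (1 / ((r⁻¹ : ℝ) : ℂ) ^ (1/2 : ℂ) *
      ∑' n : ℤ, Complex.exp (-(π:ℂ) / ((r⁻¹ : ℝ) : ℂ) * ((n:ℂ) + Complex.I * (Complex.I / 2)) ^ 2))
      = ((Real.sqrt r * ∑' n : ℤ, Real.exp (-(2 * π ^ 2 * σ ^ 2) * ((n : ℝ) - 1/2) ^ 2) : ℝ) : ℂ) := by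
    have h2 : ((r⁻¹ : ℝ) : ℂ) ^ (1/2 : ℂ) = (((r⁻¹ ^ (1/2 : ℝ) : ℝ)) : ℂ) := by
      rw [Complex.ofReal_cpow (by positivity)]
      norm_num
    have h3 : (1 : ℂ) / (((r⁻¹ ^ (1/2 : ℝ) : ℝ)) : ℂ) = ((Real.sqrt r : ℝ) : ℂ) := by
      rw [← Complex.ofReal_one, ← Complex.ofReal_div]
      congr 1
      rw [Real.inv_rpow hrpos.le, ← Real.sqrt_eq_rpow, one_div, inv_inv]
    rw [h2, h3, Complex.ofReal_mul, Complex.ofReal_tsum]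
    refine congrArg _ (tsum_congr fun n => ?_)
    have h4 : (-(π:ℂ) / ((r⁻¹ : ℝ) : ℂ) * ((n:ℂ) + Complex.I * (Complex.I / 2)) ^ 2)
        = ((-(2 * π ^ 2 * σ ^ 2) * ((n : ℝ) - 1/2) ^ 2 : ℝ) : ℂ) := by
      have : Complex.I * (Complex.I / 2) = -(1/2 : ℂ) := by
        rw [mul_div_assoc', Complex.I_mul_I]; norm_num
      rw [this]
      push_cast [hr]
      rw [div_eq_mul_inv, inv_inv]
      ring
    rw [h4, Complex.ofReal_exp]
  rw [hL, hR] at key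
  exact_mod_cast key

set_option maxHeartbeats 1000000 in
lemma aux_bound (c : ℝ) (hc : 0 < c) :
    ∑' n : ℤ, Real.exp (-c * ((n : ℝ) - 1/2) ^ 2) ≤
      Real.exp (-c/4) + (Real.exp (-c/4) + Real.exp (-9*c/4)) / (1 - Real.exp (-c)) := by
  have hq0 : (0:ℝ) < Real.exp (-c) := Real.exp_pos _
  have hq1 : Real.exp (-c) < 1 := Real.exp_lt_one_iff.mpr (by linarith)
  have h1q : (0:ℝ) < 1 - Real.exp (-c) := by linarith
  have hgeom : Summable (fun n : ℕ => Real.exp (-c) ^ n) :=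
    summable_geometric_of_lt_one hq0.le hq1
  have hgs : ∑' n : ℕ, Real.exp (-c) ^ n = (1 - Real.exp (-c))⁻¹ :=
    tsum_geometric_of_lt_one hq0.le hq1
  have keyp : ∀ n : ℕ, Real.exp (-c * ((n : ℝ) - 1/2) ^ 2)
      ≤ Real.exp (3*c/4) * Real.exp (-c) ^ n := by
    intro n
    rw [← Real.exp_nat_mul, ← Real.exp_add]
    apply Real.exp_le_exp.mpr
    nlinarith [sq_nonneg ((n:ℝ) - 1)]
  have keyp1 : ∀ n : ℕ, Real.exp (-c * (((n:ℝ) + 1) - 1/2) ^ 2)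
      ≤ Real.exp (-c/4) * Real.exp (-c) ^ n := by
    intro n
    rw [← Real.exp_nat_mul, ← Real.exp_add]
    apply Real.exp_le_exp.mpr
    nlinarith [sq_nonneg (n:ℝ)]
  have keym : ∀ n : ℕ, Real.exp (-c * (((-(n+1) : ℤ) : ℝ) - 1/2) ^ 2)
      ≤ Real.exp (-9*c/4) * Real.exp (-c) ^ n := by
    intro n
    rw [← Real.exp_nat_mul, ← Real.exp_add]
    apply Real.exp_le_exp.mpr
    push_cast
    nlinarith [sq_nonneg (n:ℝ)]
  have hsp : Summable (fun n : ℕ => Real.exp (-c * ((n : ℝ) - 1/2) ^ 2)) :=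
    Summable.of_nonneg_of_le (fun n => (Real.exp_pos _).le) keyp (hgeom.mul_left _)
  have hsp1 : Summable (fun n : ℕ => Real.exp (-c * (((n:ℝ) + 1) - 1/2) ^ 2)) :=
    Summable.of_nonneg_of_le (fun n => (Real.exp_pos _).le) keyp1 (hgeom.mul_left _)
  have hsm : Summable (fun n : ℕ => Real.exp (-c * (((-(n+1) : ℤ) : ℝ) - 1/2) ^ 2)) :=
    Summable.of_nonneg_of_le (fun n => (Real.exp_pos _).le) keym (hgeom.mul_left _)
  have hsp' : Summable (fun n : ℕ => Real.exp (-c * (((n:ℤ) : ℝ) - 1/2) ^ 2)) :=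
    hsp.congr (fun n => by push_cast; ring_nf)
  have heq := tsum_of_nat_of_neg_add_one (f := fun j : ℤ => Real.exp (-c * ((j : ℝ) - 1/2) ^ 2)) hsp' hsm
  rw [heq]
  have hcast : ∑' n : ℕ, Real.exp (-c * (((n:ℤ) : ℝ) - 1/2) ^ 2)
      = ∑' n : ℕ, Real.exp (-c * ((n : ℝ) - 1/2) ^ 2) := by
    refine tsum_congr fun n => by push_cast; ring_nf
  rw [hcast]
  have hsplit : ∑' n : ℕ, Real.exp (-c * ((n : ℝ) - 1/2) ^ 2)
      = Real.exp (-c/4) + ∑' n : ℕ, Real.exp (-c * (((n:ℝ) + 1) - 1/2) ^ 2) := by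
    rw [Summable.tsum_eq_zero_add hsp]
    push_cast
    norm_num
    ring
  have hbp : ∑' n : ℕ, Real.exp (-c * (((n:ℝ) + 1) - 1/2) ^ 2)
      ≤ Real.exp (-c/4) * (1 - Real.exp (-c))⁻¹ := by
    calc ∑' n : ℕ, Real.exp (-c * (((n:ℝ) + 1) - 1/2) ^ 2)
        ≤ ∑' n : ℕ, Real.exp (-c/4) * Real.exp (-c) ^ n :=
          Summable.tsum_le_tsum keyp1 hsp1 (hgeom.mul_left _)
      _ = Real.exp (-c/4) * (1 - Real.exp (-c))⁻¹ := by rw [tsum_mul_left, hgs]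
  have hbm : ∑' n : ℕ, Real.exp (-c * (((-(n+1) : ℤ) : ℝ) - 1/2) ^ 2)
      ≤ Real.exp (-9*c/4) * (1 - Real.exp (-c))⁻¹ := by
    calc ∑' n : ℕ, Real.exp (-c * (((-(n+1) : ℤ) : ℝ) - 1/2) ^ 2)
        ≤ ∑' n : ℕ, Real.exp (-9*c/4) * Real.exp (-c) ^ n :=
          Summable.tsum_le_tsum keym hsm (hgeom.mul_left _)
      _ = Real.exp (-9*c/4) * (1 - Real.exp (-c))⁻¹ := by rw [tsum_mul_left, hgs]
  have hrhs : Real.exp (-c/4) + (Real.exp (-c/4) + Real.exp (-9*c/4)) / (1 - Real.exp (-c))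
      = (Real.exp (-c/4) + Real.exp (-c/4) * (1 - Real.exp (-c))⁻¹)
        + Real.exp (-9*c/4) * (1 - Real.exp (-c))⁻¹ := by
    field_simp
    ring
  rw [hrhs, hsplit]
  exact add_le_add (add_le_add le_rfl hbp) hbm


set_option maxHeartbeats 2000000 in
theorem stmt16 (σ : ℝ) (hσ : 1/2 ≤ σ) :
    rw' σ 0 ≤ Real.exp (-σ ^ 2) := by
  have hσ0 : 0 < σ := by linarith
  have hπ : (3.141592 : ℝ) < π := Real.pi_gt_d6
  have hπ' : π < 3.141593 := Real.pi_lt_d6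
  have hπ2 : (9.8696 : ℝ) ≤ π ^ 2 := by nlinarith
  have hσ2 : (1/4 : ℝ) ≤ σ ^ 2 := by nlinarith
  obtain ⟨c, hc⟩ : ∃ c : ℝ, c = 2 * π ^ 2 * σ ^ 2 := ⟨_, rfl⟩
  have hcpos : 0 < c := by rw [hc]; positivity
  have hc4 : (4 : ℝ) ≤ c := by nlinarith
  have he1 : (2.7182818 : ℝ) ≤ Real.exp 1 := (Real.exp_one_gt_d9.le).trans' (by norm_num)
  have hexp4 : (50 : ℝ) ≤ Real.exp 4 := by
    have h4 : Real.exp 4 = Real.exp 1 ^ 4 := by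
      rw [← Real.exp_nat_mul]; norm_num
    calc (50:ℝ) ≤ 2.7182818 ^ 4 := by norm_num
      _ ≤ Real.exp 1 ^ 4 := by gcongr
      _ = Real.exp 4 := h4.symm
  have hexp8 : (2900 : ℝ) ≤ Real.exp 8 := by
    have h8 : Real.exp 8 = Real.exp 1 ^ 8 := by
      rw [← Real.exp_nat_mul]; norm_num
    calc (2900:ℝ) ≤ 2.7182818 ^ 8 := by norm_num
      _ ≤ Real.exp 1 ^ 8 := by gcongr
      _ = Real.exp 8 := h8.symm
  have hq : Real.exp (-c) ≤ 1/50 := by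
    rw [Real.exp_neg]
    rw [inv_le_comm₀ (Real.exp_pos _) (by norm_num)]
    calc (1/50 : ℝ)⁻¹ = 50 := by norm_num
      _ ≤ Real.exp 4 := hexp4
      _ ≤ Real.exp c := Real.exp_le_exp.mpr hc4
  have h1q : (49/50 : ℝ) ≤ 1 - Real.exp (-c) := by linarith
  have h1q' : (0:ℝ) < 1 - Real.exp (-c) := by linarith
  have hpos := Real.exp_pos (-c/4)
  have h9c : Real.exp (-9*c/4) ≤ Real.exp (-c/4) * (1/2900) := by
    have heq9 : Real.exp (-9*c/4) = Real.exp (-c/4) * Real.exp (-(2*c)) := by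
      rw [← Real.exp_add]; ring_nf
    rw [heq9]
    have h2c : Real.exp (-(2*c)) ≤ 1/2900 := by
      rw [Real.exp_neg, inv_le_comm₀ (Real.exp_pos _) (by norm_num)]
      calc (1/2900 : ℝ)⁻¹ = 2900 := by norm_num
        _ ≤ Real.exp 8 := hexp8
        _ ≤ Real.exp (2*c) := Real.exp_le_exp.mpr (by linarith)
    nlinarith
  -- bound the tsum
  rw [aux_ident σ hσ0, ← hc]
  have hT := aux_bound c hcpos
  have hTB : ∑' n : ℤ, Real.exp (-c * ((n : ℝ) - 1/2) ^ 2)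
      ≤ (2.021 : ℝ) * Real.exp (-c/4) := by
    refine hT.trans ?_
    have hinv : (1 - Real.exp (-c))⁻¹ ≤ 50/49 := by
      rw [show (50/49 : ℝ) = (49/50 : ℝ)⁻¹ by norm_num]
      exact inv_anti₀ (by norm_num) h1q
    have hnum : Real.exp (-c/4) + Real.exp (-9*c/4)
        ≤ Real.exp (-c/4) * (2901/2900) := by nlinarith
    have hnn : (0:ℝ) ≤ Real.exp (-c/4) + Real.exp (-9*c/4) := by positivity
    calc Real.exp (-c/4) + (Real.exp (-c/4) + Real.exp (-9*c/4)) / (1 - Real.exp (-c))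
        ≤ Real.exp (-c/4) + (Real.exp (-c/4) * (2901/2900)) * (50/49) := by
          have h1 : (Real.exp (-c/4) + Real.exp (-9*c/4)) / (1 - Real.exp (-c))
              ≤ (Real.exp (-c/4) * (2901/2900)) * (50/49) := by
            rw [div_eq_mul_inv]
            have hip : (0:ℝ) < (1 - Real.exp (-c))⁻¹ := by positivity
            nlinarith
          linarith
      _ ≤ (2.021 : ℝ) * Real.exp (-c/4) := by nlinarith
  -- sqrt bound
  have hsqrt : Real.sqrt (2*π*σ^2) ≤ 2.5069 * σ := by
    have hle : 2*π*σ^2 ≤ (2.5069*σ)^2 := by nlinarith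
    calc Real.sqrt (2*π*σ^2) ≤ Real.sqrt ((2.5069*σ)^2) := Real.sqrt_le_sqrt hle
      _ = 2.5069*σ := Real.sqrt_sq (by positivity)
  have hTnn : 0 ≤ ∑' n : ℤ, Real.exp (-c * ((n : ℝ) - 1/2) ^ 2) :=
    tsum_nonneg fun n => (Real.exp_pos _).le
  have hstep : Real.sqrt (2*π*σ^2) * ∑' n : ℤ, Real.exp (-c * ((n : ℝ) - 1/2) ^ 2)
      ≤ (2.5069*σ) * ((2.021 : ℝ) * Real.exp (-c/4)) :=
    mul_le_mul hsqrt hTB hTnn (by positivity)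
  refine hstep.trans ?_
  clear hstep hT hTB hTnn hsqrt
  -- final numeric inequality
  have hx0 : (0:ℝ) ≤ c/4 - σ^2 := by nlinarith
  have hek : Real.exp 1 * (c/4 - σ^2) ≤ Real.exp (c/4 - σ^2) := by
    have h := Real.add_one_le_exp (c/4 - σ^2 - 1)
    calc Real.exp 1 * (c/4 - σ^2) ≤ Real.exp 1 * Real.exp (c/4 - σ^2 - 1) :=
          mul_le_mul_of_nonneg_left (by linarith) (Real.exp_pos 1).le
      _ = Real.exp (c/4 - σ^2) := by rw [← Real.exp_add]; ring_nf
  have hck : (10.69 : ℝ) * σ^2 ≤ Real.exp (c/4 - σ^2) := by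
    refine le_trans ?_ hek
    nlinarith
  have hbig : 2.5069 * σ * 2.021 ≤ Real.exp (c/4 - σ^2) := by nlinarith
  have hXpos : (0:ℝ) < Real.exp (c/4 - σ^2) := Real.exp_pos _
  have hEeq : Real.exp (-c/4) = Real.exp (-σ^2) / Real.exp (c/4 - σ^2) := by
    rw [← Real.exp_sub]; ring_nf
  rw [hEeq, show (2.5069*σ) * ((2.021:ℝ) * (Real.exp (-σ^2) / Real.exp (c/4 - σ^2)))
      = (2.5069 * σ * 2.021) * Real.exp (-σ^2) / Real.exp (c/4 - σ^2) from by ring,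
    div_le_iff₀ hXpos]
  nlinarith [Real.exp_pos (-σ^2), mul_le_mul_of_nonneg_right hbig (Real.exp_pos (-σ^2)).le]
end

section
/- For σ > 0 and any x ≥ -1/2, the alternating tail bound holds: for any positive integer k with 2k-1 > σ - x (so the terms become convex and decreasing), ∑_{j≥2k-1} (-1)^{j-1} exp(-(j²+2xj)/(2σ²)) ≥ (1/2)·exp(-((2k-1)²+2x(2k-1))/(2σ²)). -/
/-- Key convexity inequality: if `0 ≤ δ`, `0 ≤ c ≤ δ²`, then `e^δ + e^{-(δ+c)} ≥ 2`. -/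
private lemma stmt17_key (δ c : ℝ) (hδ : 0 ≤ δ) (hc : 0 ≤ c) (h : c ≤ δ ^ 2) :
    2 ≤ Real.exp δ + Real.exp (-(δ + c)) := by
  have hu := Real.add_one_le_exp δ
  have hv := Real.add_one_le_exp (-c)
  have hu0 := Real.exp_pos δ
  have hv0 := Real.exp_pos (-c)
  have hrw : Real.exp (-(δ + c)) = Real.exp (-c) / Real.exp δ := by
    rw [← Real.exp_sub]; ring_nf
  rw [hrw, ← sub_nonneg]
  have h2 : 0 ≤ Real.exp δ ^ 2 + Real.exp (-c) - 2 * Real.exp δ := by nlinarith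
  have h3 : Real.exp δ + Real.exp (-c) / Real.exp δ - 2
      = (Real.exp δ ^ 2 + Real.exp (-c) - 2 * Real.exp δ) / Real.exp δ := by
    field_simp
  rw [h3]
  exact div_nonneg h2 hu0.le

set_option maxHeartbeats 1000000 in
theorem stmt17 (σ x : ℝ) (hσ : 0 < σ) (hx : -1/2 ≤ x) (k : ℕ) (hk : 1 ≤ k)
    (hkσ : σ - x < 2 * (k : ℝ) - 1) :
    (1 / 2) * Real.exp (-((2 * (k : ℝ) - 1) ^ 2 + 2 * x * (2 * (k : ℝ) - 1)) / (2 * σ ^ 2)) ≤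
      ∑' j : ℕ, (-1 : ℝ) ^ j *
        Real.exp (-((2 * (k : ℝ) - 1 + j) ^ 2 + 2 * x * (2 * (k : ℝ) - 1 + j)) / (2 * σ ^ 2)) := by
  have hσ2 : (0 : ℝ) < σ ^ 2 := by positivity
  set a : ℝ := 2 * (k : ℝ) - 1 with ha_def
  have hax : σ < a + x := by linarith
  have hax0 : 0 < a + x := lt_trans hσ hax
  set E : ℕ → ℝ := fun j => ((a + (j : ℝ)) ^ 2 + 2 * x * (a + (j : ℝ))) / (2 * σ ^ 2) with hE
  set f : ℕ → ℝ := fun j =>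
    Real.exp (-((a + (j : ℝ)) ^ 2 + 2 * x * (a + (j : ℝ))) / (2 * σ ^ 2)) with hf_def
  have hfE : ∀ j : ℕ, f j = Real.exp (-E j) := by
    intro j; simp only [hf_def, hE, neg_div]
  have hpos : ∀ j : ℕ, 0 < f j := fun j => Real.exp_pos _
  have hEstep : ∀ j : ℕ, E (j + 1) = E j + (a + (j : ℝ) + x + 1 / 2) / σ ^ 2 := by
    intro j
    simp only [hE]
    push_cast
    field_simp
    ring
  have hδpos : ∀ j : ℕ, 0 < (a + (j : ℝ) + x + 1 / 2) / σ ^ 2 := by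
    intro j
    have hj : (0 : ℝ) ≤ (j : ℝ) := Nat.cast_nonneg j
    apply div_pos _ hσ2
    linarith
  -- antitone
  have hanti : ∀ j : ℕ, f (j + 1) ≤ f j := by
    intro j
    rw [hfE, hfE]
    apply Real.exp_le_exp.2
    rw [hEstep j]
    have := hδpos j
    linarith
  -- convexity step
  have hconv : ∀ j : ℕ, 2 * f (j + 1) ≤ f j + f (j + 2) := by
    intro j
    set δ : ℝ := (a + (j : ℝ) + x + 1 / 2) / σ ^ 2 with hδ_def
    set c : ℝ := 1 / σ ^ 2 with hc_def
    have hj : (0 : ℝ) ≤ (j : ℝ) := Nat.cast_nonneg j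
    have hδmul : δ * σ ^ 2 = a + (j : ℝ) + x + 1 / 2 := by
      rw [hδ_def]; field_simp
    have hδ0 : 0 ≤ δ := (hδpos j).le
    have hc0 : 0 ≤ c := by positivity
    have hcδ : c ≤ δ ^ 2 := by
      rw [hc_def, div_le_iff₀ hσ2]
      have h1 : σ ≤ δ * σ ^ 2 := by rw [hδmul]; linarith
      nlinarith [sq_nonneg (δ * σ ^ 2 - σ), sq_nonneg δ]
    have hE1 : E (j + 1) = E j + δ := by rw [hEstep j]
    have hE2 : E (j + 2) = E (j + 1) + δ + c := by
      have h2 : E (j + 2) = E (j + 1) + (a + ((j : ℝ) + 1) + x + 1 / 2) / σ ^ 2 := by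
        have := hEstep (j + 1)
        push_cast at this ⊢
        convert this using 2 <;> push_cast <;> ring
      rw [h2, hδ_def, hc_def]
      field_simp
      ring
    have hkey := stmt17_key δ c hδ0 hc0 hcδ
    have hfj : f j = f (j + 1) * Real.exp δ := by
      rw [hfE, hfE, ← Real.exp_add, hE1]; ring_nf
    have hfj2 : f (j + 2) = f (j + 1) * Real.exp (-(δ + c)) := by
      rw [hfE, hfE, ← Real.exp_add, hE2]; ring_nf
    rw [hfj, hfj2]
    have := hpos (j + 1)
    nlinarith
  -- summability
  have hgeom : ∀ j : ℕ, f j ≤ f 0 * Real.exp (-((a + x) / σ ^ 2)) ^ j := by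
    intro j
    rw [← Real.exp_nat_mul, hfE, hfE, ← Real.exp_add]
    apply Real.exp_le_exp.2
    have hj : (0 : ℝ) ≤ (j : ℝ) := Nat.cast_nonneg j
    have hkey : E j - (E 0 + (j : ℝ) * ((a + x) / σ ^ 2)) = (j : ℝ) ^ 2 / (2 * σ ^ 2) := by
      simp only [hE]
      push_cast
      field_simp
      ring
    have hnn : (0 : ℝ) ≤ (j : ℝ) ^ 2 / (2 * σ ^ 2) := by positivity
    have hmul : (j : ℝ) * -((a + x) / σ ^ 2) = -((j : ℝ) * ((a + x) / σ ^ 2)) := by ring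
    rw [hmul]
    linarith
  have hr1 : Real.exp (-((a + x) / σ ^ 2)) < 1 := by
    rw [Real.exp_lt_one_iff]
    have : 0 < (a + x) / σ ^ 2 := by positivity
    linarith
  have hfs : Summable f :=
    Summable.of_nonneg_of_le (fun j => (hpos j).le) hgeom
      ((summable_geometric_of_lt_one (Real.exp_pos _).le hr1).mul_left _)
  have hfs1 : Summable (fun j => f (j + 1)) := (summable_nat_add_iff 1).2 hfs
  have habs : ∀ g : ℕ → ℝ, Summable g → (∀ j, 0 ≤ g j) →
      Summable (fun j => (-1 : ℝ) ^ j * g j) := by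
    intro g hg hg0
    rw [← summable_abs_iff]
    have : (fun j => |(-1 : ℝ) ^ j * g j|) = g := by
      funext j
      rw [abs_mul, abs_pow, abs_neg, abs_one, one_pow, one_mul, abs_of_nonneg (hg0 j)]
    rwa [this]
  have hg : Summable (fun j => (-1 : ℝ) ^ j * f j) := habs f hfs (fun j => (hpos j).le)
  have hg1 : Summable (fun j => (-1 : ℝ) ^ j * f (j + 1)) :=
    habs _ hfs1 (fun j => (hpos (j + 1)).le)
  have hd : Summable (fun j => f j - f (j + 1)) := hfs.sub hfs1
  -- the paired difference sum is nonnegative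
  have hinj2 : Function.Injective (fun m : ℕ => 2 * m) := fun m n h => by
    simp only at h; omega
  have hinj2' : Function.Injective (fun m : ℕ => 2 * m + 1) := fun m n h => by
    simp only at h; omega
  set d : ℕ → ℝ := fun j => f j - f (j + 1) with hd_def
  have hde : Summable (fun m => d (2 * m)) := hd.comp_injective hinj2
  have hdo : Summable (fun m => d (2 * m + 1)) := hd.comp_injective hinj2'
  have hge : (fun m : ℕ => (-1 : ℝ) ^ (2 * m) * d (2 * m)) = fun m => d (2 * m) := by
    funext m; rw [pow_mul]; norm_num
  have hgo : (fun m : ℕ => (-1 : ℝ) ^ (2 * m + 1) * d (2 * m + 1))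
      = fun m => -d (2 * m + 1) := by
    funext m; rw [pow_succ, pow_mul]; norm_num
  have hgd : Summable (fun j => (-1 : ℝ) ^ j * d j) := by
    have := hg.sub hg1
    simpa [hd_def, mul_sub] using this
  have h2m : Summable (fun m : ℕ => (-1 : ℝ) ^ (2 * m) * d (2 * m)) := by
    rw [hge]; exact hde
  have h2m1 : Summable (fun m : ℕ => (-1 : ℝ) ^ (2 * m + 1) * d (2 * m + 1)) := by
    rw [hgo]; exact hdo.neg
  have hT0 : 0 ≤ ∑' j, (-1 : ℝ) ^ j * d j := by
    rw [← tsum_even_add_odd (f := fun j => (-1 : ℝ) ^ j * d j) h2m h2m1]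
    have he : (∑' m, (-1 : ℝ) ^ (2 * m) * d (2 * m)) = ∑' m, d (2 * m) := by rw [hge]
    have ho : (∑' m, (-1 : ℝ) ^ (2 * m + 1) * d (2 * m + 1)) = -∑' m, d (2 * m + 1) := by
      rw [hgo, tsum_neg]
    rw [he, ho]
    have hle : ∑' m, d (2 * m + 1) ≤ ∑' m, d (2 * m) := by
      apply Summable.tsum_le_tsum _ hdo hde
      intro m
      have h1 := hconv (2 * m)
      simp only [hd_def]
      have : 2 * m + 1 + 1 = 2 * m + 2 := by ring
      rw [this]
      linarith
    linarith
  -- identity chain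
  have hS : (∑' j, (-1 : ℝ) ^ j * f j) = f 0 - ∑' j, (-1 : ℝ) ^ j * f (j + 1) := by
    rw [Summable.tsum_eq_zero_add hg]
    have h1 : (fun j : ℕ => (-1 : ℝ) ^ (j + 1) * f (j + 1))
        = fun j => -((-1 : ℝ) ^ j * f (j + 1)) := by
      funext j; rw [pow_succ]; ring
    rw [h1, tsum_neg, sub_eq_add_neg]
    norm_num
  have hT : (∑' j, (-1 : ℝ) ^ j * f j) - (∑' j, (-1 : ℝ) ^ j * f (j + 1))
      = ∑' j, (-1 : ℝ) ^ j * d j := by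
    rw [← Summable.tsum_sub hg hg1]
    exact tsum_congr fun j => (mul_sub _ _ _).symm
  have main : (1 / 2) * f 0 ≤ ∑' j, (-1 : ℝ) ^ j * f j := by linarith
  have h0 : Real.exp (-(a ^ 2 + 2 * x * a) / (2 * σ ^ 2)) = f 0 := by
    simp only [hf_def, Nat.cast_zero, add_zero]
  rw [h0]
  exact main
end

section
/- Let v_1, …, v_t ∈ ℝⁿ with ‖v_i‖₂ ≤ 1, let δ ∈ (0, 1/2), and let w_0, …, w_t be the iterates of the PartialColoring₁ algorithm, so that each w_ℓ is distributed as N(0, I_n). Then with probability at least 1 − δ, ‖w_ℓ − w_0‖_∞ ≤ 2√(2 log(2nt/δ)) for all ℓ ∈ [t] simultaneously. -/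
open MeasureTheory ProbabilityTheory

section Aux
open Real Set

lemma gauss_tail_one_sided {M : ℝ} (hM : 1 ≤ M) :
    gaussianReal 0 1 {x | M < x} ≤ ENNReal.ofReal (Real.exp (-M^2/2) / 2) := by
  have hM0 : 0 < M := lt_of_lt_of_le one_pos hM
  have hset : {x : ℝ | M < x} = Ioi M := rfl
  rw [gaussianReal_apply 0 one_ne_zero, hset]
  have hsqrt2pi : 2 ≤ Real.sqrt (2 * π) := by
    have h4 : (4:ℝ) ≤ 2 * π := by nlinarith [Real.pi_gt_three]
    have : Real.sqrt 4 ≤ Real.sqrt (2 * π) := Real.sqrt_le_sqrt h4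
    rwa [show (4:ℝ) = 2^2 by norm_num, Real.sqrt_sq (by norm_num : (0:ℝ) ≤ 2)] at this
  set C : ℝ := (Real.sqrt (2 * π))⁻¹ * Real.exp (M^2/2) with hC
  have hCpos : 0 < C := by positivity
  have hstep1 : ∫⁻ x in Ioi M, gaussianPDF 0 1 x
      ≤ ∫⁻ x in Ioi M, ENNReal.ofReal (C * Real.exp (-(M * x))) := by
    refine setLIntegral_mono (by fun_prop) (fun x hx => ?_)
    have hx' : M < x := hx
    unfold gaussianPDF gaussianPDFReal
    apply ENNReal.ofReal_le_ofReal
    simp only [NNReal.coe_one, mul_one, sub_zero]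
    rw [hC, mul_assoc]
    refine mul_le_mul_of_nonneg_left ?_ (by positivity)
    rw [← Real.exp_add]
    apply Real.exp_le_exp.2
    nlinarith [sq_nonneg (x - M)]
  have hint : IntegrableOn (fun x => C * Real.exp (-(M * x))) (Ioi M) := by
    have := (exp_neg_integrableOn_Ioi M hM0)
    simpa [neg_mul, IntegrableOn] using this.const_mul C
  have hstep2 : ∫⁻ x in Ioi M, ENNReal.ofReal (C * Real.exp (-(M * x)))
      = ENNReal.ofReal (∫ x in Ioi M, C * Real.exp (-(M * x))) := by
    rw [ofReal_integral_eq_lintegral_ofReal hint (ae_of_all _ (fun x => by positivity))]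
  have hval : ∫ x in Ioi M, C * Real.exp (-(M * x))
      = C * (M⁻¹ * Real.exp (-(M * M))) := by
    rw [MeasureTheory.integral_const_mul]
    congr 1
    have := integral_comp_mul_left_Ioi (fun u => Real.exp (-u)) M hM0
    simpa [smul_eq_mul, integral_exp_neg_Ioi, integral_exp_Iic] using this
  refine le_trans (hstep1.trans_eq hstep2) (ENNReal.ofReal_le_ofReal ?_)
  rw [hval, hC]
  have h1 : Real.exp (M^2/2) * Real.exp (-(M*M)) = Real.exp (-M^2/2) := by
    rw [← Real.exp_add]; ring_nf
  have hMinv : M⁻¹ ≤ 1 := by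
    rw [inv_le_one_iff₀]; right; exact hM
  have hs : (Real.sqrt (2 * π))⁻¹ ≤ 1/2 := by
    rw [inv_le_comm₀ (by positivity) (by norm_num)]
    linarith
  calc (Real.sqrt (2*π))⁻¹ * Real.exp (M^2/2) * (M⁻¹ * Real.exp (-(M*M)))
      = ((Real.sqrt (2*π))⁻¹ * M⁻¹) * (Real.exp (M^2/2) * Real.exp (-(M*M))) := by ring
    _ ≤ (1/2 * 1) * Real.exp (-M^2/2) := by
        rw [h1]
        have : (Real.sqrt (2*π))⁻¹ * M⁻¹ ≤ 1/2 * 1 :=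
          mul_le_mul hs hMinv (by positivity) (by norm_num)
        exact mul_le_mul_of_nonneg_right this (Real.exp_nonneg _)
    _ = Real.exp (-M^2/2) / 2 := by ring

lemma gauss_abs_tail {M : ℝ} (hM : 1 ≤ M) :
    gaussianReal 0 1 {x : ℝ | M < |x|} ≤ ENNReal.ofReal (Real.exp (-M^2/2)) := by
  have hmap : (gaussianReal 0 1).map ((-1 : ℝ) * ·) = gaussianReal 0 1 := by
    rw [gaussianReal_map_const_mul (-1 : ℝ)]
    congr 1
    · ring
    · ext : 1; norm_num
  have hneg : gaussianReal 0 1 {x : ℝ | x < -M} = gaussianReal 0 1 {x : ℝ | M < x} := by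
    conv_rhs => rw [← hmap]
    rw [show {x : ℝ | M < x} = Set.Ioi M from rfl,
      Measure.map_apply (f := fun x : ℝ => -1 * x) (by fun_prop) measurableSet_Ioi]
    congr 1
    ext x
    simp only [Set.mem_preimage, Set.mem_Ioi, Set.mem_setOf_eq, neg_mul, one_mul, lt_neg]
  have h1 := gauss_tail_one_sided hM
  have hsub : {x : ℝ | M < |x|} ⊆ {x : ℝ | M < x} ∪ {x : ℝ | x < -M} := by
    intro x hx
    have hx' : M < |x| := hx
    rcases lt_abs.1 hx' with h | h
    · exact Or.inl h
    · exact Or.inr (lt_neg.1 h)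
  calc gaussianReal 0 1 {x : ℝ | M < |x|}
      ≤ gaussianReal 0 1 ({x : ℝ | M < x} ∪ {x : ℝ | x < -M}) := measure_mono hsub
    _ ≤ gaussianReal 0 1 {x : ℝ | M < x} + gaussianReal 0 1 {x : ℝ | x < -M} :=
        measure_union_le _ _
    _ ≤ ENNReal.ofReal (Real.exp (-M^2/2) / 2) + ENNReal.ofReal (Real.exp (-M^2/2) / 2) :=
        add_le_add h1 (hneg ▸ h1)
    _ = ENNReal.ofReal (Real.exp (-M^2/2)) := by
        rw [← ENNReal.ofReal_add (by positivity) (by positivity)]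
        norm_num

end Aux

theorem stmt18 {Ω : Type*} [MeasurableSpace Ω] (P : Measure Ω) [IsProbabilityMeasure P]
    (n t : ℕ) (hn : 1 ≤ n) (ht : 1 ≤ t) (δ : ℝ) (hδ : δ ∈ Set.Ioo (0 : ℝ) (1 / 2))
    (v : Fin t → EuclideanSpace ℝ (Fin n)) (hv : ∀ i, ‖v i‖ ≤ 1)
    (w : Fin (t + 1) → Ω → EuclideanSpace ℝ (Fin n))
    (ε : Fin t → Ω → ℝ) (hε : ∀ i ω, ε i ω = -1 ∨ ε i ω = 0 ∨ ε i ω = 1)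
    (hstep : ∀ (i : Fin t) (ω : Ω), w i.succ ω = w i.castSucc ω + ε i ω • v i)
    (hlaw : ∀ (ℓ : Fin (t + 1)) (j : Fin n),
      Measure.map (fun ω => w ℓ ω j) P = gaussianReal 0 1) :
    1 - ENNReal.ofReal δ ≤
      P {ω | ∀ (ℓ : Fin (t + 1)) (j : Fin n),
        |w ℓ ω j - w 0 ω j| ≤ 2 * Real.sqrt (2 * Real.log (2 * n * t / δ))} := by
  obtain ⟨hδ0, hδhalf⟩ := hδ
  set M : ℝ := Real.sqrt (2 * Real.log (2 * n * t / δ)) with hMdef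
  have hn' : (1:ℝ) ≤ n := by exact_mod_cast hn
  have ht' : (1:ℝ) ≤ t := by exact_mod_cast ht
  have hK : (4:ℝ) ≤ 2 * n * t / δ := by
    rw [le_div_iff₀ hδ0]; nlinarith
  have hKpos : (0:ℝ) < 2 * n * t / δ := by linarith
  have hlog : 1 ≤ Real.log (2 * n * t / δ) := by
    rw [Real.le_log_iff_exp_le hKpos]
    have := Real.exp_one_lt_d9
    linarith
  have hM2 : M^2 = 2 * Real.log (2 * n * t / δ) := Real.sq_sqrt (by linarith)
  have hM1 : 1 ≤ M := by
    rw [show (1:ℝ) = Real.sqrt 1 from Real.sqrt_one.symm]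
    exact Real.sqrt_le_sqrt (by linarith)
  have hExp : Real.exp (-M^2/2) = δ / (2 * n * t) := by
    rw [hM2, show -(2 * Real.log (2*(n:ℝ)*t/δ))/2 = -Real.log (2*(n:ℝ)*t/δ) by ring,
      Real.exp_neg, Real.exp_log hKpos, inv_div]
  have hmeasSet : MeasurableSet {x : ℝ | M < |x|} :=
    measurableSet_lt measurable_const (measurable_id.abs)
  have key : ∀ (ℓ : Fin (t+1)) (j : Fin n),
      P {ω | M < |w ℓ ω j|} ≤ ENNReal.ofReal (δ / (2 * n * t)) := by
    intro ℓ j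
    have hae : AEMeasurable (fun ω => w ℓ ω j) P := by
      by_contra h
      have h2 := hlaw ℓ j
      rw [Measure.map_of_not_aemeasurable h] at h2
      have h1 : (gaussianReal 0 1) Set.univ = 1 := measure_univ
      rw [← h2] at h1
      simp at h1
    have hmap := Measure.map_apply_of_aemeasurable hae hmeasSet
    rw [hlaw ℓ j] at hmap
    have hb := gauss_abs_tail hM1
    rw [hmap, hExp] at hb
    exact hb
  set U := ⋃ p : Fin (t+1) × Fin n, {ω | M < |w p.1 ω p.2|} with hUdef
  have hU : P U ≤ ENNReal.ofReal δ := by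
    calc P U ≤ ∑' p : Fin (t+1) × Fin n, P {ω | M < |w p.1 ω p.2|} := measure_iUnion_le _
      _ ≤ ∑' _p : Fin (t+1) × Fin n, ENNReal.ofReal (δ / (2*n*t)) :=
          ENNReal.tsum_le_tsum fun p => key p.1 p.2
      _ = ((t+1) * n : ℕ) * ENNReal.ofReal (δ/(2*n*t)) := by
          rw [tsum_fintype, Finset.sum_const, Finset.card_univ, Fintype.card_prod,
            Fintype.card_fin, Fintype.card_fin, nsmul_eq_mul]
      _ ≤ ENNReal.ofReal δ := by
          rw [← ENNReal.ofReal_natCast, ← ENNReal.ofReal_mul (by positivity)]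
          apply ENNReal.ofReal_le_ofReal
          push_cast
          have heq : ((t:ℝ)+1) * n * (δ / (2*n*t)) = δ * (((t:ℝ)+1) / (2*t)) := by
            field_simp
          rw [heq]
          have hfrac : ((t:ℝ)+1) / (2*t) ≤ 1 := by
            rw [div_le_one (by linarith)]
            linarith
          nlinarith
  have hsub : Uᶜ ⊆ {ω | ∀ (ℓ : Fin (t+1)) (j : Fin n),
      |w ℓ ω j - w 0 ω j| ≤ 2 * M} := by
    intro ω hω ℓ j
    have hall : ∀ (ℓ' : Fin (t+1)) (j' : Fin n), ¬ (M < |w ℓ' ω j'|) := by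
      intro ℓ' j' h
      exact hω (Set.mem_iUnion.2 ⟨(ℓ', j'), h⟩)
    have h1 : |w ℓ ω j| ≤ M := not_lt.1 (hall ℓ j)
    have h2 : |w 0 ω j| ≤ M := not_lt.1 (hall 0 j)
    calc |w ℓ ω j - w 0 ω j| ≤ |w ℓ ω j| + |w 0 ω j| := abs_sub _ _
      _ ≤ 2 * M := by linarith
  calc 1 - ENNReal.ofReal δ ≤ 1 - P U := tsub_le_tsub le_rfl hU
    _ ≤ P Uᶜ := by
        rw [tsub_le_iff_right]
        calc (1:ENNReal) = P (Uᶜ ∪ U) := by rw [Set.compl_union_self]; exact measure_univ.symm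
          _ ≤ P Uᶜ + P U := measure_union_le _ _
    _ ≤ _ := measure_mono hsub
end
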